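/- arXiv:1602.05846 — 4 statements merged into one kernel-verified Lean document; each statement's English description precedes it below -/
import Mathlib

section
/- Let $0<\lambda<n$, $0<\alpha<1$, and let $K:\mathbb{R}^n\setminus\{0\}\to\mathbb{R}$ satisfy $|K(x)|\le C|x|^{\lambda-n}$ for $x\neq 0$ and $|K(x-y)-K(x)|\le C|y|/|x|^{n+1-\lambda}$ for $|y|\le |x|/2$. Then there is a constant $C'$ such that for every $x\neq 0$, $\int_{\mathbb{R}^n}\frac{|K(x)-K(y)|}{|x-y|^{n+\alpha}}\,dy \le C'|x|^{\lambda-n-\alpha}$. -/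
open MeasureTheory

open Metric Set
open scoped ENNReal NNReal

lemma annulus_bound {n : ℕ} (hn : 1 ≤ n) {p a b : ℝ} (ha : 0 < a) (hb : 0 ≤ b) (hp : p < 0) :
    ∫⁻ z in {z : EuclideanSpace ℝ (Fin n) | a ≤ ‖z‖ ∧ ‖z‖ < b},
      ENNReal.ofReal (‖z‖ ^ p)
      ≤ ENNReal.ofReal (a ^ p * b ^ (n : ℝ)) * volume (ball (0 : EuclideanSpace ℝ (Fin n)) 1) := by
  haveI : Nonempty (Fin n) := Fin.pos_iff_nonempty.mp hn
  haveI : Nontrivial (EuclideanSpace ℝ (Fin n)) := inferInstance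
  set S : Set (EuclideanSpace ℝ (Fin n)) := {z | a ≤ ‖z‖ ∧ ‖z‖ < b} with hS
  have hSm : MeasurableSet S :=
    (measurableSet_le measurable_const measurable_norm).inter
      (measurableSet_lt measurable_norm measurable_const)
  calc ∫⁻ z in S, ENNReal.ofReal (‖z‖ ^ p)
      ≤ ∫⁻ _ in S, ENNReal.ofReal (a ^ p) := by
        refine setLIntegral_mono' hSm fun z hz => ?_
        exact ENNReal.ofReal_le_ofReal
          (Real.rpow_le_rpow_of_nonpos ha hz.1 hp.le)
    _ = ENNReal.ofReal (a ^ p) * volume S := setLIntegral_const _ _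
    _ ≤ ENNReal.ofReal (a ^ p) * volume (ball (0 : EuclideanSpace ℝ (Fin n)) b) := by
        have : S ⊆ ball (0 : EuclideanSpace ℝ (Fin n)) b :=
          fun z hz => mem_ball_zero_iff.mpr hz.2
        gcongr

    _ = ENNReal.ofReal (a ^ p * b ^ (n : ℝ)) * volume (ball (0 : EuclideanSpace ℝ (Fin n)) 1) := by
        rw [Measure.addHaar_ball _ _ hb, ← mul_assoc,
          ← ENNReal.ofReal_mul (Real.rpow_nonneg ha.le _)]
        congr 3
        rw [finrank_euclideanSpace_fin, ← Real.rpow_natCast b n]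

lemma ball_bound {n : ℕ} (hn : 1 ≤ n) {p : ℝ} (hpn : -(n : ℝ) < p) (hp : p < 0) :
    ∃ D : ℝ, 0 < D ∧ ∀ R : ℝ, 0 < R →
      ∫⁻ z in ball (0 : EuclideanSpace ℝ (Fin n)) R, ENNReal.ofReal (‖z‖ ^ p)
        ≤ ENNReal.ofReal (D * R ^ (p + n)) := by
  haveI : Nonempty (Fin n) := Fin.pos_iff_nonempty.mp hn
  have h2 : (0 : ℝ) < 1/2 := by norm_num
  have hpn' : 0 < p + n := by linarith
  set q : ℝ := (1/2 : ℝ) ^ (p + (n : ℝ)) with hq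
  have hq0 : 0 < q := Real.rpow_pos_of_pos h2 _
  have hq1 : q < 1 := Real.rpow_lt_one h2.le (by norm_num) hpn'
  set r : ℝ≥0∞ := ENNReal.ofReal q with hr
  have hr1 : r < 1 := by
    rw [hr, ← ENNReal.ofReal_one]
    exact ENNReal.ofReal_lt_ofReal_iff_of_nonneg hq0.le |>.mpr hq1
  set v : ℝ≥0∞ := volume (ball (0 : EuclideanSpace ℝ (Fin n)) 1) with hv
  set T : ℝ≥0∞ := ENNReal.ofReal ((1/2 : ℝ) ^ p) * v * (1 - r)⁻¹ with hT
  have hTne : T ≠ ⊤ := by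
    refine ENNReal.mul_ne_top (ENNReal.mul_ne_top ENNReal.ofReal_ne_top
      measure_ball_lt_top.ne) (ENNReal.inv_ne_top.mpr ?_)
    intro h
    exact absurd (tsub_eq_zero_iff_le.mp h) (not_le.mpr hr1)
  refine ⟨T.toReal + 1, by positivity, fun R hR => ?_⟩
  set A : ℕ → Set (EuclideanSpace ℝ (Fin n)) :=
    fun k => {z | R * (1/2 : ℝ) ^ (k+1) ≤ ‖z‖ ∧ ‖z‖ < R * (1/2 : ℝ) ^ k} with hA
  -- covering
  have hcov : ball (0 : EuclideanSpace ℝ (Fin n)) R ⊆ {0} ∪ ⋃ k, A k := by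
    intro z hz
    rcases eq_or_ne z 0 with h0 | h0
    · exact Or.inl h0
    · have hz0 : 0 < ‖z‖ := norm_pos_iff.mpr h0
      have hzR : ‖z‖ < R := mem_ball_zero_iff.mp hz
      have hex : ∃ m : ℕ, R * (1/2 : ℝ) ^ (m+1) ≤ ‖z‖ := by
        obtain ⟨m, hm⟩ := exists_pow_lt_of_lt_one (div_pos hz0 hR) (by norm_num : (1/2 : ℝ) < 1)
        refine ⟨m, ?_⟩
        have h1 : (1/2 : ℝ) ^ (m+1) ≤ (1/2 : ℝ) ^ m :=
          pow_le_pow_of_le_one h2.le (by norm_num) (Nat.le_succ m)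
        have h3 : R * (1/2 : ℝ) ^ m < ‖z‖ := by
          rw [lt_div_iff₀ hR] at hm; linarith [hm]
        nlinarith [h1, h3, hR.le]
      refine Or.inr (mem_iUnion.mpr ⟨Nat.find hex, Nat.find_spec hex, ?_⟩)
      rcases Nat.eq_zero_or_pos (Nat.find hex) with hk0 | hk0
      · rw [hk0]; simpa using hzR
      · obtain ⟨j, hj⟩ := Nat.exists_eq_succ_of_ne_zero hk0.ne'
        rw [hj]
        have := Nat.find_min hex (by omega : j < Nat.find hex)
        push_neg at this
        exact this
  have hmeas0 : volume ({0} : Set (EuclideanSpace ℝ (Fin n))) = 0 := measure_singleton 0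
  calc ∫⁻ z in ball (0 : EuclideanSpace ℝ (Fin n)) R, ENNReal.ofReal (‖z‖ ^ p)
      ≤ ∫⁻ z in ({0} : Set (EuclideanSpace ℝ (Fin n))) ∪ ⋃ k, A k, ENNReal.ofReal (‖z‖ ^ p) :=
        lintegral_mono_set hcov
    _ ≤ (∫⁻ z in ({0} : Set (EuclideanSpace ℝ (Fin n))), ENNReal.ofReal (‖z‖ ^ p))
        + ∫⁻ z in ⋃ k, A k, ENNReal.ofReal (‖z‖ ^ p) := lintegral_union_le _ _ _
    _ ≤ 0 + ∑' k, ∫⁻ z in A k, ENNReal.ofReal (‖z‖ ^ p) := by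
        gcongr
        · exact le_of_eq (setLIntegral_measure_zero _ _ hmeas0)
        · exact lintegral_iUnion_le _ _
    _ = ∑' k, ∫⁻ z in A k, ENNReal.ofReal (‖z‖ ^ p) := zero_add _
    _ ≤ ∑' k, ENNReal.ofReal (((1/2 : ℝ) ^ p * R ^ (p + (n : ℝ))) * q ^ k) * v := by
        refine ENNReal.tsum_le_tsum fun k => ?_
        have hb := annulus_bound hn (a := R * (1/2 : ℝ) ^ (k+1)) (b := R * (1/2 : ℝ) ^ k)
          (by positivity) (by positivity) hp
        refine le_trans hb ?_
        gcongr ENNReal.ofReal ?_ * v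
        apply le_of_eq
        -- algebra
        have e1 : ((1:ℝ)/2) ^ (k+1) = (1/2 : ℝ) ^ (k : ℝ) * (1/2 : ℝ) := by
          rw [pow_succ, Real.rpow_natCast]
        have e2 : ((1:ℝ)/2) ^ k = (1/2 : ℝ) ^ (k : ℝ) := (Real.rpow_natCast _ k).symm
        rw [e1, e2, ← mul_assoc, Real.mul_rpow (by positivity) h2.le,
          Real.mul_rpow hR.le (by positivity), Real.mul_rpow hR.le (by positivity),
          ← Real.rpow_natCast ((1/2 : ℝ) ^ (p + (n : ℝ))) k,
          ← Real.rpow_mul h2.le, ← Real.rpow_mul h2.le, ← Real.rpow_mul h2.le,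
          Real.rpow_add hR]
        rw [show (1/2 : ℝ) ^ ((p + (n:ℝ)) * (k:ℝ)) = (1/2 : ℝ) ^ ((k:ℝ)*p) * (1/2:ℝ) ^ ((k:ℝ)*(n:ℝ)) by
          rw [← Real.rpow_add h2]; ring_nf]
        ring
    _ = ∑' k : ℕ, ENNReal.ofReal ((1/2 : ℝ) ^ p * R ^ (p + (n : ℝ))) * v * r ^ k := by
        refine tsum_congr fun k => ?_
        rw [ENNReal.ofReal_mul (by positivity), ENNReal.ofReal_pow hq0.le, hr]
        ring
    _ = ENNReal.ofReal ((1/2 : ℝ) ^ p * R ^ (p + (n : ℝ))) * v * (1 - r)⁻¹ := by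
        rw [ENNReal.tsum_mul_left, ENNReal.tsum_geometric]
    _ = ENNReal.ofReal (R ^ (p + (n : ℝ))) * T := by
        rw [hT, ENNReal.ofReal_mul (by positivity)]
        ring
    _ ≤ ENNReal.ofReal ((T.toReal + 1) * R ^ (p + (n : ℝ))) := by
        rw [ENNReal.ofReal_mul (by positivity), mul_comm]
        gcongr
        calc T = ENNReal.ofReal T.toReal := (ENNReal.ofReal_toReal hTne).symm
          _ ≤ ENNReal.ofReal (T.toReal + 1) := ENNReal.ofReal_le_ofReal (by linarith)

lemma compl_bound {n : ℕ} (hn : 1 ≤ n) {p : ℝ} (hpn : p < -(n : ℝ)) :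
    ∃ D : ℝ, 0 < D ∧ ∀ R : ℝ, 0 < R →
      ∫⁻ z in (ball (0 : EuclideanSpace ℝ (Fin n)) R)ᶜ, ENNReal.ofReal (‖z‖ ^ p)
        ≤ ENNReal.ofReal (D * R ^ (p + n)) := by
  haveI : Nonempty (Fin n) := Fin.pos_iff_nonempty.mp hn
  have hn0 : (0 : ℝ) < n := by exact_mod_cast hn
  have hp : p < 0 := by linarith
  have hpn' : p + n < 0 := by linarith
  set q : ℝ := (2 : ℝ) ^ (p + (n : ℝ)) with hq
  have hq0 : 0 < q := Real.rpow_pos_of_pos (by norm_num) _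
  have hq1 : q < 1 := Real.rpow_lt_one_of_one_lt_of_neg (by norm_num) hpn'
  set r : ℝ≥0∞ := ENNReal.ofReal q with hr
  have hr1 : r < 1 := by
    rw [hr, ← ENNReal.ofReal_one]
    exact ENNReal.ofReal_lt_ofReal_iff_of_nonneg hq0.le |>.mpr hq1
  set v : ℝ≥0∞ := volume (ball (0 : EuclideanSpace ℝ (Fin n)) 1) with hv
  set T : ℝ≥0∞ := ENNReal.ofReal ((2 : ℝ) ^ (n : ℝ)) * v * (1 - r)⁻¹ with hT
  have hTne : T ≠ ⊤ := by
    refine ENNReal.mul_ne_top (ENNReal.mul_ne_top ENNReal.ofReal_ne_top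
      measure_ball_lt_top.ne) (ENNReal.inv_ne_top.mpr ?_)
    intro h
    exact absurd (tsub_eq_zero_iff_le.mp h) (not_le.mpr hr1)
  refine ⟨T.toReal + 1, by positivity, fun R hR => ?_⟩
  set A : ℕ → Set (EuclideanSpace ℝ (Fin n)) :=
    fun k => {z | R * (2 : ℝ) ^ k ≤ ‖z‖ ∧ ‖z‖ < R * (2 : ℝ) ^ (k+1)} with hA
  have hcov : (ball (0 : EuclideanSpace ℝ (Fin n)) R)ᶜ ⊆ ⋃ k, A k := by
    intro z hz
    have hzR : R ≤ ‖z‖ := by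
      have := mem_ball_zero_iff.not.mp hz
      linarith [not_lt.mp this]
    have hex : ∃ m : ℕ, ‖z‖ < R * (2 : ℝ) ^ (m+1) := by
      obtain ⟨m, hm⟩ := pow_unbounded_of_one_lt (‖z‖ / R) (by norm_num : (1 : ℝ) < 2)
      refine ⟨m, ?_⟩
      rw [div_lt_iff₀ hR] at hm
      have : (2 : ℝ) ^ m ≤ (2 : ℝ) ^ (m+1) := by
        apply pow_le_pow_right₀ (by norm_num) (Nat.le_succ m)
      nlinarith
    refine mem_iUnion.mpr ⟨Nat.find hex, ?_, Nat.find_spec hex⟩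
    rcases Nat.eq_zero_or_pos (Nat.find hex) with hk0 | hk0
    · rw [hk0]; simpa using hzR
    · obtain ⟨j, hj⟩ := Nat.exists_eq_succ_of_ne_zero hk0.ne'
      rw [hj]
      have := Nat.find_min hex (by omega : j < Nat.find hex)
      push_neg at this
      exact this
  calc ∫⁻ z in (ball (0 : EuclideanSpace ℝ (Fin n)) R)ᶜ, ENNReal.ofReal (‖z‖ ^ p)
      ≤ ∫⁻ z in ⋃ k, A k, ENNReal.ofReal (‖z‖ ^ p) := lintegral_mono_set hcov
    _ ≤ ∑' k, ∫⁻ z in A k, ENNReal.ofReal (‖z‖ ^ p) := lintegral_iUnion_le _ _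
    _ ≤ ∑' k, ENNReal.ofReal (((2 : ℝ) ^ (n : ℝ) * R ^ (p + (n : ℝ))) * q ^ k) * v := by
        refine ENNReal.tsum_le_tsum fun k => ?_
        have hb := annulus_bound hn (a := R * (2 : ℝ) ^ k) (b := R * (2 : ℝ) ^ (k+1))
          (by positivity) (by positivity) hp
        refine le_trans hb ?_
        gcongr ENNReal.ofReal ?_ * v
        apply le_of_eq
        have h2 : (0 : ℝ) < 2 := by norm_num
        have e1 : ((2:ℝ)) ^ (k+1) = (2 : ℝ) ^ (k : ℝ) * 2 := by
          rw [pow_succ, Real.rpow_natCast]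
        have e2 : ((2:ℝ)) ^ k = (2 : ℝ) ^ (k : ℝ) := (Real.rpow_natCast _ k).symm
        rw [e1, e2, ← mul_assoc, Real.mul_rpow hR.le (by positivity),
          Real.mul_rpow (by positivity) h2.le, Real.mul_rpow hR.le (by positivity),
          ← Real.rpow_natCast ((2 : ℝ) ^ (p + (n : ℝ))) k,
          ← Real.rpow_mul h2.le, ← Real.rpow_mul h2.le, ← Real.rpow_mul h2.le,
          Real.rpow_add hR]
        rw [show (2 : ℝ) ^ ((p + (n:ℝ)) * (k:ℝ)) = (2 : ℝ) ^ ((k:ℝ)*p) * (2:ℝ) ^ ((k:ℝ)*(n:ℝ)) by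
          rw [← Real.rpow_add h2]; ring_nf]
        ring
    _ = ∑' k : ℕ, ENNReal.ofReal ((2 : ℝ) ^ (n : ℝ) * R ^ (p + (n : ℝ))) * v * r ^ k := by
        refine tsum_congr fun k => ?_
        rw [ENNReal.ofReal_mul (by positivity), ENNReal.ofReal_pow hq0.le, hr]
        ring
    _ = ENNReal.ofReal ((2 : ℝ) ^ (n : ℝ) * R ^ (p + (n : ℝ))) * v * (1 - r)⁻¹ := by
        rw [ENNReal.tsum_mul_left, ENNReal.tsum_geometric]
    _ = ENNReal.ofReal (R ^ (p + (n : ℝ))) * T := by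
        rw [hT, ENNReal.ofReal_mul (by positivity)]
        ring
    _ ≤ ENNReal.ofReal ((T.toReal + 1) * R ^ (p + (n : ℝ))) := by
        rw [ENNReal.ofReal_mul (by positivity), mul_comm]
        gcongr
        calc T = ENNReal.ofReal T.toReal := (ENNReal.ofReal_toReal hTne).symm
          _ ≤ ENNReal.ofReal (T.toReal + 1) := ENNReal.ofReal_le_ofReal (by linarith)

lemma translate_lintegral {n : ℕ} (x : EuclideanSpace ℝ (Fin n)) {f : EuclideanSpace ℝ (Fin n) → ℝ≥0∞}
    (hf : Measurable f) {t : Set (EuclideanSpace ℝ (Fin n))} (ht : MeasurableSet t) :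
    ∫⁻ y in (fun y => x - y) ⁻¹' t, f (x - y) = ∫⁻ z in t, f z := by
  have hmp : MeasurePreserving (fun y : EuclideanSpace ℝ (Fin n) => x - y) volume volume := by
    have h1 := MeasureTheory.measurePreserving_add_left
      (volume : Measure (EuclideanSpace ℝ (Fin n))) x
    have h2 := MeasureTheory.Measure.measurePreserving_neg
      (volume : Measure (EuclideanSpace ℝ (Fin n)))
    simpa [Function.comp_def, sub_eq_add_neg] using h1.comp h2
  rw [← lintegral_indicator ht, ← lintegral_indicator (hmp.measurable ht)]
  rw [← hmp.lintegral_comp (hf.indicator ht)]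
  congr 1


theorem stmt3 {n : ℕ} (hn : 1 ≤ n) (lam α C : ℝ) (hl0 : 0 < lam) (hln : lam < n)
    (hα0 : 0 < α) (hα1 : α < 1) (hC : 0 < C)
    (K : EuclideanSpace ℝ (Fin n) → ℝ)
    (hK1 : ∀ x : EuclideanSpace ℝ (Fin n), x ≠ 0 → |K x| ≤ C * ‖x‖ ^ (lam - n))
    (hK2 : ∀ x y : EuclideanSpace ℝ (Fin n), x ≠ 0 → ‖y‖ ≤ ‖x‖ / 2 →
      |K (x - y) - K x| ≤ C * ‖y‖ / ‖x‖ ^ ((n : ℝ) + 1 - lam)) :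
    ∃ C' > (0 : ℝ), ∀ x : EuclideanSpace ℝ (Fin n), x ≠ 0 →
      ∫⁻ y, ENNReal.ofReal (|K x - K y| / ‖x - y‖ ^ ((n : ℝ) + α)) ≤
        ENNReal.ofReal (C' * ‖x‖ ^ (lam - n - α)) := by
  haveI : Nonempty (Fin n) := Fin.pos_iff_nonempty.mp hn
  haveI : Nontrivial (EuclideanSpace ℝ (Fin n)) := inferInstance
  have hn1 : (1 : ℝ) ≤ n := by exact_mod_cast hn
  obtain ⟨D₁, hD₁, hB₁⟩ := ball_bound (n := n) hn (p := 1 - (n : ℝ) - α)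
    (by linarith) (by linarith)
  obtain ⟨D₂, hD₂, hB₂⟩ := compl_bound (n := n) hn (p := -((n : ℝ) + α)) (by linarith)
  obtain ⟨D₃, hD₃, hB₃⟩ := ball_bound (n := n) hn (p := lam - (n : ℝ))
    (by linarith) (by linarith)
  obtain ⟨D₄, hD₄, hB₄⟩ := compl_bound (n := n) hn (p := lam - 2*(n : ℝ) - α) (by linarith)
  set E₁ : ℝ := C * D₁ * (1/2 : ℝ) ^ ((1:ℝ) - α) with hE₁
  set E₂ : ℝ := C * D₂ * (1/2 : ℝ) ^ (-α) with hE₂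
  set E₃ : ℝ := C * D₃ * (1/2 : ℝ) ^ (-((n:ℝ) + α)) * (2:ℝ) ^ lam with hE₃
  set E₄ : ℝ := C * D₄ * (2:ℝ) ^ ((n:ℝ) + α) * (2:ℝ) ^ (lam - (n:ℝ) - α) with hE₄
  have hE₁0 : 0 < E₁ := by positivity
  have hE₂0 : 0 < E₂ := by positivity
  have hE₃0 : 0 < E₃ := by positivity
  have hE₄0 : 0 < E₄ := by positivity
  refine ⟨E₁ + E₂ + E₃ + E₄, by positivity, fun x hx => ?_⟩
  set N : ℝ := ‖x‖ with hNdef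
  have hN : 0 < N := norm_pos_iff.mpr hx
  set g₁ : EuclideanSpace ℝ (Fin n) → ℝ≥0∞ :=
    fun y => ENNReal.ofReal (C * N ^ (lam - (n:ℝ) - 1) * ‖x - y‖ ^ ((1:ℝ) - n - α)) with hg₁
  set g₂ : EuclideanSpace ℝ (Fin n) → ℝ≥0∞ :=
    fun y => ENNReal.ofReal (C * N ^ (lam - (n:ℝ)) * ‖x - y‖ ^ (-((n:ℝ) + α))) with hg₂
  set g₃ : EuclideanSpace ℝ (Fin n) → ℝ≥0∞ :=
    fun y => ENNReal.ofReal (C * (N/2) ^ (-((n:ℝ) + α)) * ‖y‖ ^ (lam - (n:ℝ))) with hg₃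
  set g₄ : EuclideanSpace ℝ (Fin n) → ℝ≥0∞ :=
    fun y => ENNReal.ofReal (C * (2:ℝ) ^ ((n:ℝ) + α) * ‖y‖ ^ (lam - 2*(n:ℝ) - α)) with hg₄
  have hm₁ : Measurable g₁ := by fun_prop
  have hm₂ : Measurable g₂ := by fun_prop
  have hm₃ : Measurable g₃ := by fun_prop
  have hm₄ : Measurable g₄ := by fun_prop
  -- pointwise a.e. bound
  have hae : ∀ᵐ y : EuclideanSpace ℝ (Fin n),
      ENNReal.ofReal (|K x - K y| / ‖x - y‖ ^ ((n : ℝ) + α)) ≤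
      (ball x (N/2)).indicator g₁ y + (ball x (N/2))ᶜ.indicator g₂ y +
        (ball 0 (2*N)).indicator g₃ y + (ball 0 (2*N))ᶜ.indicator g₄ y := by
    have h0 : ∀ᵐ y : EuclideanSpace ℝ (Fin n), y ≠ 0 := by
      haveI : NullSingletonClass (volume : Measure (EuclideanSpace ℝ (Fin n))) := by infer_instance
      have hset : {a : EuclideanSpace ℝ (Fin n) | ¬a ≠ 0} = {0} := by ext y; simp
      rw [ae_iff, hset]
      exact measure_singleton 0
    filter_upwards [h0] with y hy0
    by_cases hyb : y ∈ ball x (N/2)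
    · -- near regime
      rcases eq_or_ne y x with rfl | hyx
      · simp
      · have hxy0 : 0 < ‖x - y‖ := by
          rw [norm_pos_iff, sub_ne_zero]; exact fun h => hyx h.symm
        have htR : ‖x - y‖ ≤ N / 2 := by
          have := mem_ball.mp hyb
          rw [dist_eq_norm, norm_sub_rev] at this
          linarith
        have hkey : |K x - K y| ≤ C * N ^ (lam - (n:ℝ) - 1) * ‖x - y‖ := by
          have h := hK2 x (x - y) hx (by simpa using htR)
          rw [sub_sub_cancel] at h
          rw [abs_sub_comm]
          have hpow : N ^ (lam - (n:ℝ) - 1) = (N ^ ((n:ℝ) + 1 - lam))⁻¹ := by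
            rw [← Real.rpow_neg hN.le]; ring_nf
          rw [hpow]
          calc |K y - K x| ≤ C * ‖x - y‖ / N ^ ((n:ℝ) + 1 - lam) := h
            _ = C * (N ^ ((n:ℝ) + 1 - lam))⁻¹ * ‖x - y‖ := by ring
        have hstep : ENNReal.ofReal (|K x - K y| / ‖x - y‖ ^ ((n : ℝ) + α)) ≤ g₁ y := by
          apply ENNReal.ofReal_le_ofReal
          have hrw : C * N ^ (lam - (n:ℝ) - 1) * ‖x - y‖ ^ ((1:ℝ) - n - α)
              = C * N ^ (lam - (n:ℝ) - 1) * ‖x - y‖ / ‖x - y‖ ^ ((n:ℝ) + α) := by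
            rw [show (1:ℝ) - n - α = 1 - ((n:ℝ) + α) by ring,
              Real.rpow_sub hxy0, Real.rpow_one]
            ring
          rw [hrw]
          gcongr
        calc ENNReal.ofReal (|K x - K y| / ‖x - y‖ ^ ((n : ℝ) + α))
            ≤ (ball x (N/2)).indicator g₁ y := by rwa [indicator_of_mem hyb]
          _ ≤ _ := by
              refine le_trans ?_ (self_le_add_right _ _)
              refine le_trans ?_ (self_le_add_right _ _)
              exact self_le_add_right _ _
    · -- far regime
      have hyc : y ∈ (ball x (N/2))ᶜ := hyb
      have htR : N / 2 ≤ ‖x - y‖ := by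
        have := mem_ball.not.mp hyb
        rw [dist_eq_norm, norm_sub_rev] at this
        linarith [not_lt.mp this]
      have hxy0 : 0 < ‖x - y‖ := lt_of_lt_of_le (by linarith) htR
      have htp : 0 < ‖x - y‖ ^ ((n:ℝ) + α) := Real.rpow_pos_of_pos hxy0 _
      have hsplit : ENNReal.ofReal (|K x - K y| / ‖x - y‖ ^ ((n : ℝ) + α)) ≤
          ENNReal.ofReal (|K x| / ‖x - y‖ ^ ((n:ℝ) + α)) +
          ENNReal.ofReal (|K y| / ‖x - y‖ ^ ((n:ℝ) + α)) := by
        rw [← ENNReal.ofReal_add (by positivity) (by positivity), ← add_div]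
        apply ENNReal.ofReal_le_ofReal
        gcongr
        exact abs_sub _ _
      have hpart1 : ENNReal.ofReal (|K x| / ‖x - y‖ ^ ((n:ℝ) + α)) ≤
          (ball x (N/2))ᶜ.indicator g₂ y := by
        rw [indicator_of_mem hyc]
        apply ENNReal.ofReal_le_ofReal
        calc |K x| / ‖x - y‖ ^ ((n:ℝ) + α) ≤ (C * N ^ (lam - (n:ℝ))) / ‖x - y‖ ^ ((n:ℝ) + α) := by
              gcongr
              exact hK1 x hx
          _ = C * N ^ (lam - (n:ℝ)) * ‖x - y‖ ^ (-((n:ℝ) + α)) := by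
              rw [Real.rpow_neg hxy0.le]; ring
      have hpart2 : ENNReal.ofReal (|K y| / ‖x - y‖ ^ ((n:ℝ) + α)) ≤
          (ball 0 (2*N)).indicator g₃ y + (ball 0 (2*N))ᶜ.indicator g₄ y := by
        have hKy := hK1 y hy0
        have hy0' : 0 < ‖y‖ := norm_pos_iff.mpr hy0
        by_cases hy2 : y ∈ ball (0 : EuclideanSpace ℝ (Fin n)) (2*N)
        · refine le_trans ?_ (self_le_add_right _ _)
          rw [indicator_of_mem hy2]
          apply ENNReal.ofReal_le_ofReal
          have hd : (N/2) ^ ((n:ℝ) + α) ≤ ‖x - y‖ ^ ((n:ℝ) + α) :=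
            Real.rpow_le_rpow (by linarith) htR (by positivity)
          calc |K y| / ‖x - y‖ ^ ((n:ℝ) + α)
              ≤ (C * ‖y‖ ^ (lam - (n:ℝ))) / (N/2) ^ ((n:ℝ) + α) :=
                div_le_div₀ (by positivity) hKy (by positivity) hd
            _ = C * (N/2) ^ (-((n:ℝ) + α)) * ‖y‖ ^ (lam - (n:ℝ)) := by
                rw [Real.rpow_neg (by positivity)]; ring
        · refine le_trans ?_ (le_add_self)
          rw [indicator_of_mem (by exact hy2 : y ∈ (ball (0:EuclideanSpace ℝ (Fin n)) (2*N))ᶜ)]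
          apply ENNReal.ofReal_le_ofReal
          have hy2N : 2*N ≤ ‖y‖ := by
            have := mem_ball_zero_iff.not.mp hy2
            linarith [not_lt.mp this]
          have hhalf : ‖y‖ / 2 ≤ ‖x - y‖ := by
            have h1 : ‖y‖ - ‖x‖ ≤ ‖y - x‖ := norm_sub_norm_le y x
            rw [norm_sub_rev] at h1
            have : (N : ℝ) = ‖x‖ := rfl
            linarith
          have hd : (‖y‖/2) ^ ((n:ℝ) + α) ≤ ‖x - y‖ ^ ((n:ℝ) + α) :=
            Real.rpow_le_rpow (by positivity) hhalf (by positivity)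
          calc |K y| / ‖x - y‖ ^ ((n:ℝ) + α)
              ≤ (C * ‖y‖ ^ (lam - (n:ℝ))) / (‖y‖/2) ^ ((n:ℝ) + α) :=
                div_le_div₀ (by positivity) hKy (by positivity) hd
            _ = C * (2:ℝ) ^ ((n:ℝ) + α) * ‖y‖ ^ (lam - 2*(n:ℝ) - α) := by
                have key : ‖y‖ ^ (lam - 2*(n:ℝ) - α)
                    = ‖y‖ ^ (lam - (n:ℝ)) / ‖y‖ ^ ((n:ℝ) + α) := by
                  rw [← Real.rpow_sub hy0']
                  congr 1
                  ring
                rw [Real.div_rpow hy0'.le (by norm_num), div_div_eq_mul_div, key]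
                ring
      calc ENNReal.ofReal (|K x - K y| / ‖x - y‖ ^ ((n : ℝ) + α))
          ≤ ENNReal.ofReal (|K x| / ‖x - y‖ ^ ((n:ℝ) + α)) +
            ENNReal.ofReal (|K y| / ‖x - y‖ ^ ((n:ℝ) + α)) := hsplit
        _ ≤ (ball x (N/2))ᶜ.indicator g₂ y +
            ((ball 0 (2*N)).indicator g₃ y + (ball 0 (2*N))ᶜ.indicator g₄ y) :=
            add_le_add hpart1 hpart2
        _ ≤ _ := by
            rw [← add_assoc]
            gcongr
            exact le_add_self
  -- integrate
  refine le_trans (lintegral_mono_ae hae) ?_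
  have hball : MeasurableSet (ball x (N/2)) := measurableSet_ball
  have hball2 : MeasurableSet (ball (0 : EuclideanSpace ℝ (Fin n)) (2*N)) := measurableSet_ball
  erw [lintegral_add_left (((hm₁.indicator hball).add (hm₂.indicator hball.compl)).add
      (hm₃.indicator hball2)),
    lintegral_add_left ((hm₁.indicator hball).add (hm₂.indicator hball.compl)),
    lintegral_add_left (hm₁.indicator hball),
    lintegral_indicator hball, lintegral_indicator hball.compl,
    lintegral_indicator hball2, lintegral_indicator hball2.compl]
  have hmeasb : Measurable fun z : EuclideanSpace ℝ (Fin n) =>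
      ENNReal.ofReal (‖z‖ ^ ((1:ℝ) - ↑n - α)) := by fun_prop
  have hmeasc : Measurable fun z : EuclideanSpace ℝ (Fin n) =>
      ENNReal.ofReal (‖z‖ ^ (-((n:ℝ) + α))) := by fun_prop
  have hpre : ball x (N/2) = (fun y => x - y) ⁻¹' (ball (0 : EuclideanSpace ℝ (Fin n)) (N/2)) := by
    ext y
    simp only [mem_preimage, mem_ball_zero_iff, mem_ball, dist_eq_norm, sub_zero]
    rw [norm_sub_rev]
  have hI1 : ∫⁻ y in ball x (N/2), g₁ y ≤ ENNReal.ofReal (E₁ * N ^ (lam - ↑n - α)) := by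
    calc ∫⁻ y in ball x (N/2), g₁ y
        = ∫⁻ y in ball x (N/2), ENNReal.ofReal (C * N ^ (lam - ↑n - 1)) *
            ENNReal.ofReal (‖x - y‖ ^ ((1:ℝ) - ↑n - α)) := by
          refine setLIntegral_congr_fun measurableSet_ball (fun y _ => ?_)
          rw [hg₁, ← ENNReal.ofReal_mul (by positivity)]
      _ = ENNReal.ofReal (C * N ^ (lam - ↑n - 1)) *
            ∫⁻ y in ball x (N/2), ENNReal.ofReal (‖x - y‖ ^ ((1:ℝ) - ↑n - α)) :=
          lintegral_const_mul _ (by fun_prop)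
      _ = ENNReal.ofReal (C * N ^ (lam - ↑n - 1)) *
            ∫⁻ z in ball (0 : EuclideanSpace ℝ (Fin n)) (N/2),
              ENNReal.ofReal (‖z‖ ^ ((1:ℝ) - ↑n - α)) := by
          rw [hpre, translate_lintegral x hmeasb measurableSet_ball]
      _ ≤ ENNReal.ofReal (C * N ^ (lam - ↑n - 1)) *
            ENNReal.ofReal (D₁ * (N/2) ^ ((1:ℝ) - ↑n - α + ↑n)) := by
          gcongr
          exact hB₁ _ (by positivity)
      _ ≤ ENNReal.ofReal (E₁ * N ^ (lam - ↑n - α)) := by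
          rw [← ENNReal.ofReal_mul (by positivity)]
          apply ENNReal.ofReal_le_ofReal
          apply le_of_eq
          rw [show (1:ℝ) - ↑n - α + ↑n = 1 - α by ring,
            show N/2 = N * (1/2) by ring, Real.mul_rpow hN.le (by norm_num), hE₁,
            show lam - (n:ℝ) - α = (lam - ↑n - 1) + (1 - α) by ring, Real.rpow_add hN]
          ring
  have hI2 : ∫⁻ y in (ball x (N/2))ᶜ, g₂ y ≤ ENNReal.ofReal (E₂ * N ^ (lam - ↑n - α)) := by
    calc ∫⁻ y in (ball x (N/2))ᶜ, g₂ y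
        = ∫⁻ y in (ball x (N/2))ᶜ, ENNReal.ofReal (C * N ^ (lam - ↑n)) *
            ENNReal.ofReal (‖x - y‖ ^ (-((n:ℝ) + α))) := by
          refine setLIntegral_congr_fun hball.compl (fun y _ => ?_)
          rw [hg₂, ← ENNReal.ofReal_mul (by positivity)]
      _ = ENNReal.ofReal (C * N ^ (lam - ↑n)) *
            ∫⁻ y in (ball x (N/2))ᶜ, ENNReal.ofReal (‖x - y‖ ^ (-((n:ℝ) + α))) :=
          lintegral_const_mul _ (by fun_prop)
      _ = ENNReal.ofReal (C * N ^ (lam - ↑n)) *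
            ∫⁻ z in (ball (0 : EuclideanSpace ℝ (Fin n)) (N/2))ᶜ,
              ENNReal.ofReal (‖z‖ ^ (-((n:ℝ) + α))) := by
          rw [hpre, ← preimage_compl, translate_lintegral x hmeasc measurableSet_ball.compl]
      _ ≤ ENNReal.ofReal (C * N ^ (lam - ↑n)) *
            ENNReal.ofReal (D₂ * (N/2) ^ (-((n:ℝ) + α) + ↑n)) := by
          gcongr
          exact hB₂ _ (by positivity)
      _ ≤ ENNReal.ofReal (E₂ * N ^ (lam - ↑n - α)) := by
          rw [← ENNReal.ofReal_mul (by positivity)]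
          apply ENNReal.ofReal_le_ofReal
          apply le_of_eq
          rw [show -((n:ℝ) + α) + ↑n = -α by ring,
            show N/2 = N * (1/2) by ring, Real.mul_rpow hN.le (by norm_num), hE₂,
            show lam - (n:ℝ) - α = (lam - ↑n) + (-α) by ring, Real.rpow_add hN]
          ring
  have hI3 : ∫⁻ y in ball (0 : EuclideanSpace ℝ (Fin n)) (2*N), g₃ y
      ≤ ENNReal.ofReal (E₃ * N ^ (lam - ↑n - α)) := by
    calc ∫⁻ y in ball (0 : EuclideanSpace ℝ (Fin n)) (2*N), g₃ y
        = ∫⁻ y in ball (0 : EuclideanSpace ℝ (Fin n)) (2*N),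
            ENNReal.ofReal (C * (N/2) ^ (-((n:ℝ) + α))) *
            ENNReal.ofReal (‖y‖ ^ (lam - ↑n)) := by
          refine setLIntegral_congr_fun hball2 (fun y _ => ?_)
          rw [hg₃, ← ENNReal.ofReal_mul (by positivity)]
      _ = ENNReal.ofReal (C * (N/2) ^ (-((n:ℝ) + α))) *
            ∫⁻ y in ball (0 : EuclideanSpace ℝ (Fin n)) (2*N),
              ENNReal.ofReal (‖y‖ ^ (lam - ↑n)) :=
          lintegral_const_mul _ (by fun_prop)
      _ ≤ ENNReal.ofReal (C * (N/2) ^ (-((n:ℝ) + α))) *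
            ENNReal.ofReal (D₃ * (2*N) ^ (lam - ↑n + ↑n)) := by
          gcongr
          exact hB₃ _ (by positivity)
      _ ≤ ENNReal.ofReal (E₃ * N ^ (lam - ↑n - α)) := by
          rw [← ENNReal.ofReal_mul (by positivity)]
          apply ENNReal.ofReal_le_ofReal
          apply le_of_eq
          rw [show lam - (n:ℝ) + ↑n = lam by ring,
            show N/2 = N * (1/2) by ring, Real.mul_rpow hN.le (by norm_num),
            Real.mul_rpow (by norm_num) hN.le, hE₃,
            show lam - (n:ℝ) - α = (-((n:ℝ) + α)) + lam by ring, Real.rpow_add hN]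
          ring
  have hI4 : ∫⁻ y in (ball (0 : EuclideanSpace ℝ (Fin n)) (2*N))ᶜ, g₄ y
      ≤ ENNReal.ofReal (E₄ * N ^ (lam - ↑n - α)) := by
    calc ∫⁻ y in (ball (0 : EuclideanSpace ℝ (Fin n)) (2*N))ᶜ, g₄ y
        = ∫⁻ y in (ball (0 : EuclideanSpace ℝ (Fin n)) (2*N))ᶜ,
            ENNReal.ofReal (C * (2:ℝ) ^ ((n:ℝ) + α)) *
            ENNReal.ofReal (‖y‖ ^ (lam - 2*(n:ℝ) - α)) := by
          refine setLIntegral_congr_fun hball2.compl (fun y _ => ?_)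
          rw [hg₄, ← ENNReal.ofReal_mul (by positivity)]
      _ = ENNReal.ofReal (C * (2:ℝ) ^ ((n:ℝ) + α)) *
            ∫⁻ y in (ball (0 : EuclideanSpace ℝ (Fin n)) (2*N))ᶜ,
              ENNReal.ofReal (‖y‖ ^ (lam - 2*(n:ℝ) - α)) :=
          lintegral_const_mul _ (by fun_prop)
      _ ≤ ENNReal.ofReal (C * (2:ℝ) ^ ((n:ℝ) + α)) *
            ENNReal.ofReal (D₄ * (2*N) ^ (lam - 2*(n:ℝ) - α + ↑n)) := by
          gcongr
          exact hB₄ _ (by positivity)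
      _ ≤ ENNReal.ofReal (E₄ * N ^ (lam - ↑n - α)) := by
          rw [← ENNReal.ofReal_mul (by positivity)]
          apply ENNReal.ofReal_le_ofReal
          apply le_of_eq
          rw [show lam - 2*(n:ℝ) - α + ↑n = lam - ↑n - α by ring,
            Real.mul_rpow (by norm_num) hN.le, hE₄]
          ring
  calc _ ≤ ENNReal.ofReal (E₁ * N ^ (lam - ↑n - α)) + ENNReal.ofReal (E₂ * N ^ (lam - ↑n - α))
        + ENNReal.ofReal (E₃ * N ^ (lam - ↑n - α)) + ENNReal.ofReal (E₄ * N ^ (lam - ↑n - α)) :=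
      add_le_add (add_le_add (add_le_add hI1 hI2) hI3) hI4
    _ = ENNReal.ofReal ((E₁ + E₂ + E₃ + E₄) * N ^ (lam - ↑n - α)) := by
      rw [← ENNReal.ofReal_add (by positivity) (by positivity),
        ← ENNReal.ofReal_add (by positivity) (by positivity),
        ← ENNReal.ofReal_add (by positivity) (by positivity)]
      ring_nf
end

section
/- Let $\alpha,\beta>0$ with $\alpha+\beta<n$. Then for every $x\in\mathbb{R}^n\setminus\{0\}$, $\int_{\mathbb{R}^n}\frac{|y|^{\alpha-n}}{|x-y|^{n-\beta}}\,dy = \frac{\gamma(\alpha)\gamma(\beta)}{\gamma(\alpha+\beta)}\,|x|^{\alpha+\beta-n}$, where $\gamma(s)=\pi^{n/2}2^{s}\Gamma(s/2)/\Gamma((n-s)/2)$. -/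
open MeasureTheory
open Real Set
open scoped ENNReal

lemma lintA {a r : ℝ} (ha : 0 < a) (hr : 0 < r) :
    ∫⁻ t in Ioi (0:ℝ), ENNReal.ofReal (t ^ (a-1) * rexp (-(r*t))) =
      ENNReal.ofReal ((1/r) ^ a * Gamma a) := by
  rw [← integral_rpow_mul_exp_neg_mul_Ioi ha hr]
  rw [ofReal_integral_eq_lintegral_ofReal]
  · have h := integrableOn_rpow_mul_exp_neg_mul_rpow (p := 1) (s := a-1) (b := r)
      (by linarith) zero_lt_one hr
    refine h.congr_fun (fun t ht => ?_) measurableSet_Ioi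
    simp only [Real.rpow_one, neg_mul]
  · filter_upwards [ae_restrict_mem measurableSet_Ioi] with t ht
    have h0 : (0:ℝ) < t := ht
    positivity

lemma lintScale (g : ℝ → ℝ≥0∞) (hg : Measurable g) {c : ℝ} (hc : 0 < c) :
    ∫⁻ t in Ioi (0:ℝ), g t = ENNReal.ofReal c * ∫⁻ v in Ioi (0:ℝ), g (c * v) := by
  have hm : Measurable fun v : ℝ => c * v := by fun_prop
  have hpre : (fun v : ℝ => c * v) ⁻¹' (Ioi 0) = Ioi 0 := by
    ext v
    simp only [mem_preimage, mem_Ioi]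
    exact mul_pos_iff_of_pos_left hc
  have h2 : Measure.map (fun v : ℝ => c * v) (volume.restrict (Ioi 0)) =
      ENNReal.ofReal c⁻¹ • volume.restrict (Ioi 0) := by
    rw [show volume.restrict (Ioi (0:ℝ)) = volume.restrict ((fun v : ℝ => c * v) ⁻¹' (Ioi 0)) by rw [hpre],
      ← Measure.restrict_map hm measurableSet_Ioi, Real.map_volume_mul_left hc.ne',
      abs_of_pos (inv_pos.2 hc), Measure.restrict_smul, hpre]
  have h1 : ∫⁻ v in Ioi (0:ℝ), g (c * v) = ENNReal.ofReal c⁻¹ * ∫⁻ t in Ioi (0:ℝ), g t := by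
    rw [← lintegral_map hg hm, h2, lintegral_smul_measure, smul_eq_mul]
  rw [h1, ← mul_assoc, ← ENNReal.ofReal_mul hc.le, mul_inv_cancel₀ hc.ne', ENNReal.ofReal_one, one_mul]
lemma lintBeta {p q : ℝ} (hp : 0 < p) (hq : 0 < q) :
    ∫⁻ v in Ioi (0:ℝ), ENNReal.ofReal (v ^ (p-1) * (1+v) ^ (-(p+q))) =
      ENNReal.ofReal (Gamma p * Gamma q / Gamma (p+q)) := by
  have hpq : 0 < p + q := by linarith
  have hG : 0 < Gamma (p+q) := Gamma_pos_of_pos hpq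
  have key : ENNReal.ofReal (Gamma (p+q)) *
      ∫⁻ v in Ioi (0:ℝ), ENNReal.ofReal (v ^ (p-1) * (1+v) ^ (-(p+q))) =
      ENNReal.ofReal (Gamma p * Gamma q) := by
    rw [← lintegral_const_mul'' _ (by fun_prop)]
    have step1 : ∫⁻ v in Ioi (0:ℝ),
        ENNReal.ofReal (Gamma (p+q)) * ENNReal.ofReal (v ^ (p-1) * (1+v) ^ (-(p+q))) =
        ∫⁻ v in Ioi (0:ℝ), ∫⁻ s in Ioi (0:ℝ),
          ENNReal.ofReal (s ^ (p+q-1) * rexp (-s)) * ENNReal.ofReal (v ^ (p-1) * rexp (-(s*v))) := by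
      refine setLIntegral_congr_fun_ae measurableSet_Ioi (ae_of_all _ (fun v hv => ?_))
      have hv' : (0:ℝ) < v := hv
      have h1v : (0:ℝ) < 1 + v := by linarith
      have : ∫⁻ s in Ioi (0:ℝ),
          ENNReal.ofReal (s ^ (p+q-1) * rexp (-s)) * ENNReal.ofReal (v ^ (p-1) * rexp (-(s*v))) =
          ∫⁻ s in Ioi (0:ℝ), ENNReal.ofReal (v ^ (p-1)) * ENNReal.ofReal (s ^ (p+q-1) * rexp (-((1+v)*s))) := by
        refine setLIntegral_congr_fun_ae measurableSet_Ioi (ae_of_all _ (fun s hs => ?_))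
        have hs' : (0:ℝ) < s := hs
        rw [← ENNReal.ofReal_mul (by positivity), ← ENNReal.ofReal_mul (by positivity)]
        congr 1
        rw [show -((1+v)*s) = -s + -(s*v) by ring, Real.exp_add]
        ring
      rw [this, lintegral_const_mul'' _ (by fun_prop), lintA hpq h1v,
        ← ENNReal.ofReal_mul (by positivity), ← ENNReal.ofReal_mul (by positivity)]
      congr 1
      rw [one_div, Real.inv_rpow h1v.le, ← Real.rpow_neg h1v.le]
      ring
    rw [step1, lintegral_lintegral_swap (by apply Measurable.aemeasurable; fun_prop)]
    have step2 : ∫⁻ s in Ioi (0:ℝ), ∫⁻ v in Ioi (0:ℝ),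
        ENNReal.ofReal (s ^ (p+q-1) * rexp (-s)) * ENNReal.ofReal (v ^ (p-1) * rexp (-(s*v))) =
        ∫⁻ s in Ioi (0:ℝ), ENNReal.ofReal (Gamma p) * ENNReal.ofReal (s ^ (q-1) * rexp (-s)) := by
      refine setLIntegral_congr_fun_ae measurableSet_Ioi (ae_of_all _ (fun s hs => ?_))
      have hs' : (0:ℝ) < s := hs
      rw [lintegral_const_mul'' _ (by fun_prop), lintA hp hs',
        ← ENNReal.ofReal_mul (by positivity : (0:ℝ) ≤ s ^ (p+q-1) * rexp (-s)),
        ← ENNReal.ofReal_mul (Gamma_pos_of_pos hp).le]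
      congr 1
      rw [one_div, Real.inv_rpow hs'.le, ← Real.rpow_neg hs'.le]
      rw [show s ^ (p+q-1) * rexp (-s) * (s ^ (-p) * Gamma p) =
        Gamma p * (s ^ (p+q-1) * s ^ (-p) * rexp (-s)) by ring, ← Real.rpow_add hs',
        show p + q - 1 + -p = q - 1 by ring]
    rw [step2, lintegral_const_mul'' _ (by fun_prop)]
    have h3 : ∫⁻ s in Ioi (0:ℝ), ENNReal.ofReal (s ^ (q-1) * rexp (-s)) =
        ENNReal.ofReal ((1/1) ^ q * Gamma q) := by
      rw [← lintA hq (one_pos (α := ℝ))]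
      refine setLIntegral_congr_fun_ae measurableSet_Ioi (ae_of_all _ (fun s _ => ?_))
      norm_num
    rw [h3, ← ENNReal.ofReal_mul (Gamma_pos_of_pos hp).le]
    norm_num
  have hcancel : ENNReal.ofReal (Gamma (p+q)) * ENNReal.ofReal (Gamma p * Gamma q / Gamma (p+q)) =
      ENNReal.ofReal (Gamma p * Gamma q) := by
    rw [← ENNReal.ofReal_mul hG.le, mul_div_cancel₀ _ hG.ne']
  exact (ENNReal.mul_right_inj (by simp [hG]) ENNReal.ofReal_ne_top).1 (key.trans hcancel.symm)
lemma integrable_gauss {n : ℕ} {b : ℝ} (hb : 0 < b) :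
    Integrable (fun v : EuclideanSpace ℝ (Fin n) => rexp (-b * ‖v‖^2)) := by
  have h := (GaussianFourier.integrable_cexp_neg_mul_sq_norm_add (b := (b:ℂ))
    (by simp [hb]) 0 (0 : EuclideanSpace ℝ (Fin n))).re
  refine h.congr (ae_of_all _ fun v => ?_)
  have h2 : (-(b:ℂ) * (‖v‖:ℂ)^2 + 0 * (inner ℝ (0 : EuclideanSpace ℝ (Fin n)) v : ℝ)) =
      ((-b * ‖v‖^2 : ℝ) : ℂ) := by push_cast; ring
  dsimp only
  rw [h2, RCLike.re_to_complex, Complex.exp_ofReal_re]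

lemma lintGauss {n : ℕ} (x : EuclideanSpace ℝ (Fin n)) {t u : ℝ} (ht : 0 < t) (hu : 0 < u) :
    ∫⁻ y : EuclideanSpace ℝ (Fin n),
      ENNReal.ofReal (rexp (-(π*t) * ‖y‖^2) * rexp (-(π*u) * ‖x-y‖^2)) =
      ENNReal.ofReal ((t+u) ^ (-((n:ℝ)/2)) * rexp (-(π*(t*u/(t+u))) * ‖x‖^2)) := by
  have htu : 0 < t + u := by linarith
  have key : ∀ y : EuclideanSpace ℝ (Fin n),
      rexp (-(π*t) * ‖y‖^2) * rexp (-(π*u) * ‖x-y‖^2) =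
      rexp (-(π*(t+u)) * ‖y - (u/(t+u)) • x‖^2) * rexp (-(π*(t*u/(t+u))) * ‖x‖^2) := by
    intro y
    rw [← Real.exp_add, ← Real.exp_add]
    congr 1
    have h1 : ‖x - y‖^2 = ‖x‖^2 - 2*(inner ℝ x y : ℝ) + ‖y‖^2 := norm_sub_sq_real x y
    have h2 : ‖y - (u/(t+u))•x‖^2 = ‖y‖^2 - 2*((u/(t+u))*(inner ℝ x y : ℝ)) + (u/(t+u))^2*‖x‖^2 := by
      rw [norm_sub_sq_real y ((u/(t+u))•x), real_inner_smul_right, real_inner_comm, norm_smul]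
      simp [mul_pow, sq_abs, Real.norm_eq_abs, abs_of_pos hu, abs_of_pos htu, abs_div]
    rw [h1, h2]
    field_simp
    ring
  simp_rw [key]
  have hsplit : ∫⁻ y : EuclideanSpace ℝ (Fin n),
      ENNReal.ofReal (rexp (-(π*(t+u)) * ‖y - (u/(t+u)) • x‖^2) * rexp (-(π*(t*u/(t+u))) * ‖x‖^2)) =
      (∫⁻ y : EuclideanSpace ℝ (Fin n), ENNReal.ofReal (rexp (-(π*(t+u)) * ‖y - (u/(t+u)) • x‖^2))) *
        ENNReal.ofReal (rexp (-(π*(t*u/(t+u))) * ‖x‖^2)) := by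
    simp_rw [ENNReal.ofReal_mul (Real.exp_nonneg _)]
    exact lintegral_mul_const'' _ (by fun_prop)
  rw [hsplit,
    lintegral_sub_right_eq_self (fun y => ENNReal.ofReal (rexp (-(π*(t+u)) * ‖y‖^2))) ((u/(t+u)) • x)]
  have hval : ∫⁻ y : EuclideanSpace ℝ (Fin n), ENNReal.ofReal (rexp (-(π*(t+u)) * ‖y‖^2)) =
      ENNReal.ofReal ((t+u) ^ (-((n:ℝ)/2))) := by
    rw [← ofReal_integral_eq_lintegral_ofReal (integrable_gauss (by positivity))
      (ae_of_all _ fun y => Real.exp_nonneg _),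
      GaussianFourier.integral_rexp_neg_mul_sq_norm (by positivity)]
    congr 1
    rw [show Module.finrank ℝ (EuclideanSpace ℝ (Fin n)) = n by simp,
      show π / (π*(t+u)) = (t+u)⁻¹ by field_simp,
      Real.inv_rpow htu.le, ← Real.rpow_neg htu.le]
  rw [hval, ← ENNReal.ofReal_mul (Real.rpow_nonneg htu.le _)]

noncomputable def gconst (n : ℕ) (s : ℝ) : ℝ :=
  Real.pi ^ ((n : ℝ) / 2) * 2 ^ s * Real.Gamma (s / 2) / Real.Gamma (((n : ℝ) - s) / 2)

set_option maxHeartbeats 2000000 in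
theorem stmt4 {n : ℕ} (hn : 1 ≤ n) (α β : ℝ) (hα : 0 < α) (hβ : 0 < β) (hαβ : α + β < n)
    (x : EuclideanSpace ℝ (Fin n)) (hx : x ≠ 0) :
    ∫ y : EuclideanSpace ℝ (Fin n), ‖y‖ ^ (α - n) / ‖x - y‖ ^ ((n : ℝ) - β) =
      gconst n α * gconst n β / gconst n (α + β) * ‖x‖ ^ (α + β - n) := by
  have hπ := Real.pi_pos
  have hx' : 0 < ‖x‖ := norm_pos_iff.mpr hx
  have hnt : Nontrivial (EuclideanSpace ℝ (Fin n)) := by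
    refine ⟨EuclideanSpace.single ⟨0, hn⟩ (1:ℝ), 0, fun h => ?_⟩
    have := congrArg (fun f => f ⟨0, hn⟩) h
    simp [EuclideanSpace.single] at this
  set a : ℝ := ((n:ℝ) - α)/2 with ha_def
  set b : ℝ := ((n:ℝ) - β)/2 with hb_def
  set c : ℝ := ((n:ℝ) - α - β)/2 with hc_def
  have ha : 0 < a := by rw [ha_def]; linarith
  have hb : 0 < b := by rw [hb_def]; linarith
  have hc : 0 < c := by rw [hc_def]; linarith
  have hΓa : 0 < Real.Gamma a := Real.Gamma_pos_of_pos ha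
  have hΓb : 0 < Real.Gamma b := Real.Gamma_pos_of_pos hb
  have hΓc : 0 < Real.Gamma c := Real.Gamma_pos_of_pos hc
  have hΓα : 0 < Real.Gamma (α/2) := Real.Gamma_pos_of_pos (by linarith)
  have hΓβ : 0 < Real.Gamma (β/2) := Real.Gamma_pos_of_pos (by linarith)
  have hΓαβ : 0 < Real.Gamma ((α+β)/2) := Real.Gamma_pos_of_pos (by linarith)
  -- step 1: subordination
  have step1 : ∫⁻ y : EuclideanSpace ℝ (Fin n),
      ENNReal.ofReal (‖y‖ ^ (α - (n:ℝ)) * ‖x - y‖ ^ (β - (n:ℝ))) =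
      ENNReal.ofReal (π ^ a / Real.Gamma a * (π ^ b / Real.Gamma b)) *
        ∫⁻ y : EuclideanSpace ℝ (Fin n), ∫⁻ t in Ioi (0:ℝ), ∫⁻ u in Ioi (0:ℝ),
          ENNReal.ofReal (t ^ (a-1) * rexp (-(π * ‖y‖^2 * t))) *
          ENNReal.ofReal (u ^ (b-1) * rexp (-(π * ‖x - y‖^2 * u))) := by
    have ha2 : -(2*a) = α - (n:ℝ) := by rw [ha_def]; ring
    have hb2 : -(2*b) = β - (n:ℝ) := by rw [hb_def]; ring
    have m0 : Measurable fun p : (EuclideanSpace ℝ (Fin n) × ℝ) × ℝ =>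
        ENNReal.ofReal (p.1.2 ^ (a-1) * rexp (-(π * ‖p.1.1‖^2 * p.1.2))) *
        ENNReal.ofReal (p.2 ^ (b-1) * rexp (-(π * ‖x - p.1.1‖^2 * p.2))) := by fun_prop
    have m1 : Measurable fun q : EuclideanSpace ℝ (Fin n) × ℝ =>
        ∫⁻ u in Ioi (0:ℝ), ENNReal.ofReal (q.2 ^ (a-1) * rexp (-(π * ‖q.1‖^2 * q.2))) *
          ENNReal.ofReal (u ^ (b-1) * rexp (-(π * ‖x - q.1‖^2 * u))) :=
      m0.lintegral_prod_right'
    have m2 : Measurable fun y : EuclideanSpace ℝ (Fin n) =>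
        ∫⁻ t in Ioi (0:ℝ), ∫⁻ u in Ioi (0:ℝ),
          ENNReal.ofReal (t ^ (a-1) * rexp (-(π * ‖y‖^2 * t))) *
          ENNReal.ofReal (u ^ (b-1) * rexp (-(π * ‖x - y‖^2 * u))) :=
      m1.lintegral_prod_right'
    rw [← lintegral_const_mul'' _ m2.aemeasurable]
    refine lintegral_congr_ae ?_
    have hae : ∀ᵐ y : EuclideanSpace ℝ (Fin n), y ≠ 0 ∧ y ≠ x := by
      refine ((ae_iff.2 ?_).and (ae_iff.2 ?_)) <;> simp
    filter_upwards [hae] with y ⟨hy0, hyx⟩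
    have hy' : 0 < ‖y‖ := norm_pos_iff.mpr hy0
    have hxy : 0 < ‖x - y‖ := by
      rw [norm_pos_iff, sub_ne_zero]; exact fun h => hyx h.symm
    have hpow : ∀ r : ℝ, 0 < r → ∀ d : ℝ, (1/(π * r^2)) ^ d = (π ^ d)⁻¹ * r ^ (-(2*d)) := by
      intro r hr d
      rw [one_div, Real.inv_rpow (by positivity), Real.mul_rpow pi_pos.le (by positivity),
        mul_inv, ← Real.rpow_natCast r 2, ← Real.rpow_mul hr.le, ← Real.rpow_neg hr.le]
      norm_num
    have h1 : ∫⁻ t in Ioi (0:ℝ), ENNReal.ofReal (t ^ (a-1) * rexp (-(π * ‖y‖^2 * t))) =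
        ENNReal.ofReal ((1/(π * ‖y‖^2)) ^ a * Real.Gamma a) := lintA ha (by positivity)
    have h2 : ∫⁻ u in Ioi (0:ℝ), ENNReal.ofReal (u ^ (b-1) * rexp (-(π * ‖x-y‖^2 * u))) =
        ENNReal.ofReal ((1/(π * ‖x-y‖^2)) ^ b * Real.Gamma b) := lintA hb (by positivity)
    calc ENNReal.ofReal (‖y‖ ^ (α - (n:ℝ)) * ‖x - y‖ ^ (β - (n:ℝ)))
        = ENNReal.ofReal (π ^ a / Real.Gamma a * (π ^ b / Real.Gamma b)) *
          (ENNReal.ofReal ((1/(π * ‖y‖^2)) ^ a * Real.Gamma a) *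
           ENNReal.ofReal ((1/(π * ‖x-y‖^2)) ^ b * Real.Gamma b)) := by
          rw [← ENNReal.ofReal_mul (by positivity), ← ENNReal.ofReal_mul (by positivity)]
          congr 1
          rw [hpow _ hy' a, hpow _ hxy b, ha2, hb2]
          have hπa : (0:ℝ) < π ^ a := Real.rpow_pos_of_pos hπ a
          have hπb : (0:ℝ) < π ^ b := Real.rpow_pos_of_pos hπ b
          field_simp
      _ = ENNReal.ofReal (π ^ a / Real.Gamma a * (π ^ b / Real.Gamma b)) *
          ∫⁻ t in Ioi (0:ℝ), ∫⁻ u in Ioi (0:ℝ),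
            ENNReal.ofReal (t ^ (a-1) * rexp (-(π * ‖y‖^2 * t))) *
            ENNReal.ofReal (u ^ (b-1) * rexp (-(π * ‖x - y‖^2 * u))) := by
          congr 1
          rw [← h1, ← h2]
          rw [← lintegral_mul_const'' _ (by fun_prop)]
          refine setLIntegral_congr_fun_ae measurableSet_Ioi (ae_of_all _ fun t _ => ?_)
          rw [← lintegral_const_mul'' _ (by fun_prop)]
  -- step 2: Fubini and Gaussian convolution
  have step2 : ∫⁻ y : EuclideanSpace ℝ (Fin n), ∫⁻ t in Ioi (0:ℝ), ∫⁻ u in Ioi (0:ℝ),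
          ENNReal.ofReal (t ^ (a-1) * rexp (-(π * ‖y‖^2 * t))) *
          ENNReal.ofReal (u ^ (b-1) * rexp (-(π * ‖x - y‖^2 * u))) =
      ∫⁻ t in Ioi (0:ℝ), ∫⁻ u in Ioi (0:ℝ),
        ENNReal.ofReal (t ^ (a-1) * u ^ (b-1) *
          ((t+u) ^ (-((n:ℝ)/2)) * rexp (-(π*(t*u/(t+u))) * ‖x‖^2))) := by
    have m0 : Measurable fun p : (EuclideanSpace ℝ (Fin n) × ℝ) × ℝ =>
        ENNReal.ofReal (p.1.2 ^ (a-1) * rexp (-(π * ‖p.1.1‖^2 * p.1.2))) *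
        ENNReal.ofReal (p.2 ^ (b-1) * rexp (-(π * ‖x - p.1.1‖^2 * p.2))) := by fun_prop
    have m1 : Measurable fun q : EuclideanSpace ℝ (Fin n) × ℝ =>
        ∫⁻ u in Ioi (0:ℝ), ENNReal.ofReal (q.2 ^ (a-1) * rexp (-(π * ‖q.1‖^2 * q.2))) *
          ENNReal.ofReal (u ^ (b-1) * rexp (-(π * ‖x - q.1‖^2 * u))) :=
      m0.lintegral_prod_right'
    rw [lintegral_lintegral_swap m1.aemeasurable]
    refine setLIntegral_congr_fun_ae measurableSet_Ioi (ae_of_all _ fun t ht => ?_)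
    have ht' : (0:ℝ) < t := ht
    have m3 : Measurable fun p : EuclideanSpace ℝ (Fin n) × ℝ =>
        ENNReal.ofReal (t ^ (a-1) * rexp (-(π * ‖p.1‖^2 * t))) *
        ENNReal.ofReal (p.2 ^ (b-1) * rexp (-(π * ‖x - p.1‖^2 * p.2))) := by fun_prop
    rw [lintegral_lintegral_swap m3.aemeasurable]
    refine setLIntegral_congr_fun_ae measurableSet_Ioi (ae_of_all _ fun u hu => ?_)
    have hu' : (0:ℝ) < u := hu
    calc ∫⁻ y : EuclideanSpace ℝ (Fin n),
          ENNReal.ofReal (t ^ (a-1) * rexp (-(π * ‖y‖^2 * t))) *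
          ENNReal.ofReal (u ^ (b-1) * rexp (-(π * ‖x - y‖^2 * u)))
        = ∫⁻ y : EuclideanSpace ℝ (Fin n), ENNReal.ofReal (t ^ (a-1) * u ^ (b-1)) *
            ENNReal.ofReal (rexp (-(π*t) * ‖y‖^2) * rexp (-(π*u) * ‖x-y‖^2)) := by
          refine lintegral_congr fun y => ?_
          rw [← ENNReal.ofReal_mul (by positivity), ← ENNReal.ofReal_mul (by positivity)]
          congr 1
          rw [show -(π * ‖y‖^2 * t) = -(π*t) * ‖y‖^2 by ring,
            show -(π * ‖x - y‖^2 * u) = -(π*u) * ‖x-y‖^2 by ring]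
          ring
      _ = ENNReal.ofReal (t ^ (a-1) * u ^ (b-1)) *
            ENNReal.ofReal ((t+u) ^ (-((n:ℝ)/2)) * rexp (-(π*(t*u/(t+u))) * ‖x‖^2)) := by
          rw [lintegral_const_mul'' _ (by fun_prop), lintGauss x ht' hu']
      _ = ENNReal.ofReal (t ^ (a-1) * u ^ (b-1) *
            ((t+u) ^ (-((n:ℝ)/2)) * rexp (-(π*(t*u/(t+u))) * ‖x‖^2))) := by
          rw [← ENNReal.ofReal_mul (by positivity)]
  -- step 3: substitution u = t * w
  have step3 : ∫⁻ t in Ioi (0:ℝ), ∫⁻ u in Ioi (0:ℝ),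
        ENNReal.ofReal (t ^ (a-1) * u ^ (b-1) *
          ((t+u) ^ (-((n:ℝ)/2)) * rexp (-(π*(t*u/(t+u))) * ‖x‖^2))) =
      ∫⁻ t in Ioi (0:ℝ), ∫⁻ w in Ioi (0:ℝ),
        ENNReal.ofReal (t ^ (c-1) * (w ^ (b-1) * (1+w) ^ (-((n:ℝ)/2))) *
          rexp (-(π * w * ‖x‖^2 / (1+w) * t))) := by
    have hcab : c = a + b - (n:ℝ)/2 := by rw [ha_def, hb_def, hc_def]; ring
    refine setLIntegral_congr_fun_ae measurableSet_Ioi (ae_of_all _ fun t ht => ?_)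
    have ht' : (0:ℝ) < t := ht
    rw [lintScale _ (by fun_prop) ht', ← lintegral_const_mul'' _ (by fun_prop)]
    refine setLIntegral_congr_fun_ae measurableSet_Ioi (ae_of_all _ fun w hw => ?_)
    have hw' : (0:ℝ) < w := hw
    have h1w : (0:ℝ) < 1 + w := by linarith
    rw [← ENNReal.ofReal_mul ht'.le]
    congr 1
    have e1 : (t*w) ^ (b-1) = t ^ (b-1) * w ^ (b-1) := Real.mul_rpow ht'.le hw'.le
    have e2 : t + t*w = t*(1+w) := by ring
    have e3 : (t*(1+w)) ^ (-((n:ℝ)/2)) = t ^ (-((n:ℝ)/2)) * (1+w) ^ (-((n:ℝ)/2)) :=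
      Real.mul_rpow ht'.le h1w.le
    have e4 : -(π*(t*(t*w)/(t*(1+w)))) * ‖x‖^2 = -(π * w * ‖x‖^2 / (1+w) * t) := by
      field_simp
    have e5 : t * t ^ (a-1) * t ^ (b-1) * t ^ (-((n:ℝ)/2)) = t ^ (c-1) := by
      nth_rewrite 1 [← Real.rpow_one t]
      rw [← Real.rpow_add ht', ← Real.rpow_add ht', ← Real.rpow_add ht']
      congr 1
      rw [hcab]; ring
    rw [e1, e2, e3, e4]
    linear_combination (w ^ (b-1) * ((1+w) ^ (-((n:ℝ)/2))) *
      rexp (-(π * w * ‖x‖^2 / (1+w) * t))) * e5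
  -- step 4: integrate in t, then Beta integral
  have step4 : ∫⁻ t in Ioi (0:ℝ), ∫⁻ w in Ioi (0:ℝ),
        ENNReal.ofReal (t ^ (c-1) * (w ^ (b-1) * (1+w) ^ (-((n:ℝ)/2))) *
          rexp (-(π * w * ‖x‖^2 / (1+w) * t))) =
      ENNReal.ofReal (Real.Gamma c * π ^ (-c) * (‖x‖^2) ^ (-c)) *
        ENNReal.ofReal (Real.Gamma (α/2) * Real.Gamma (β/2) / Real.Gamma ((α+β)/2)) := by
    have hbc : b - c = α/2 := by rw [hb_def, hc_def]; ring
    have hcn : c - (n:ℝ)/2 = -(α/2 + β/2) := by rw [hc_def]; ring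
    have m0 : Measurable fun p : ℝ × ℝ =>
        ENNReal.ofReal (p.1 ^ (c-1) * (p.2 ^ (b-1) * (1+p.2) ^ (-((n:ℝ)/2))) *
          rexp (-(π * p.2 * ‖x‖^2 / (1+p.2) * p.1))) := by fun_prop
    rw [lintegral_lintegral_swap m0.aemeasurable]
    have key : ∫⁻ w in Ioi (0:ℝ), ∫⁻ t in Ioi (0:ℝ),
        ENNReal.ofReal (t ^ (c-1) * (w ^ (b-1) * (1+w) ^ (-((n:ℝ)/2))) *
          rexp (-(π * w * ‖x‖^2 / (1+w) * t))) =
        ∫⁻ w in Ioi (0:ℝ), ENNReal.ofReal (Real.Gamma c * π ^ (-c) * (‖x‖^2) ^ (-c)) *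
          ENNReal.ofReal (w ^ (α/2-1) * (1+w) ^ (-(α/2+β/2))) := by
      refine setLIntegral_congr_fun_ae measurableSet_Ioi (ae_of_all _ fun w hw => ?_)
      have hw' : (0:ℝ) < w := hw
      have h1w : (0:ℝ) < 1 + w := by linarith
      have hr : (0:ℝ) < π * w * ‖x‖^2 / (1+w) := by positivity
      have inner : ∫⁻ t in Ioi (0:ℝ),
          ENNReal.ofReal (t ^ (c-1) * (w ^ (b-1) * (1+w) ^ (-((n:ℝ)/2))) *
            rexp (-(π * w * ‖x‖^2 / (1+w) * t))) =
          ENNReal.ofReal (w ^ (b-1) * (1+w) ^ (-((n:ℝ)/2))) *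
            ENNReal.ofReal ((1/(π * w * ‖x‖^2 / (1+w))) ^ c * Real.Gamma c) := by
        rw [← lintA hc hr, ← lintegral_const_mul'' _ (by fun_prop)]
        refine setLIntegral_congr_fun_ae measurableSet_Ioi (ae_of_all _ fun t ht => ?_)
        have ht' : (0:ℝ) < t := ht
        rw [← ENNReal.ofReal_mul (by positivity)]
        congr 1
        ring
      rw [inner, ← ENNReal.ofReal_mul (by positivity), ← ENNReal.ofReal_mul (by positivity)]
      congr 1
      have key2 : (1/(π * w * ‖x‖^2 / (1+w))) ^ c =
          π ^ (-c) * w ^ (-c) * (‖x‖^2) ^ (-c) * (1+w) ^ c := by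
        rw [one_div, Real.inv_rpow (by positivity), ← Real.rpow_neg (by positivity),
          Real.div_rpow (by positivity) h1w.le, Real.mul_rpow (by positivity) (by positivity),
          Real.mul_rpow pi_pos.le hw'.le, Real.rpow_neg h1w.le]
        field_simp
      rw [key2]
      have e1 : w ^ (b-1) * w ^ (-c) = w ^ (α/2-1) := by
        rw [← Real.rpow_add hw']; congr 1; linarith
      have e2 : (1+w) ^ (-((n:ℝ)/2)) * (1+w) ^ c = (1+w) ^ (-(α/2+β/2)) := by
        rw [← Real.rpow_add h1w]; congr 1; linarith
      calc w ^ (b-1) * (1+w) ^ (-((n:ℝ)/2)) *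
            (π ^ (-c) * w ^ (-c) * (‖x‖^2) ^ (-c) * (1+w) ^ c * Real.Gamma c)
          = Real.Gamma c * π ^ (-c) * (‖x‖^2) ^ (-c) *
            ((w ^ (b-1) * w ^ (-c)) * ((1+w) ^ (-((n:ℝ)/2)) * (1+w) ^ c)) := by ring
        _ = _ := by rw [e1, e2]
    rw [key, lintegral_const_mul'' _ (by fun_prop)]
    congr 1
    have hBeta := lintBeta (show (0:ℝ) < α/2 by linarith) (show (0:ℝ) < β/2 by linarith)
    rw [show Real.Gamma (α/2 + β/2) = Real.Gamma ((α+β)/2) from by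
      rw [show α/2 + β/2 = (α+β)/2 by ring]] at hBeta
    exact hBeta
  -- combine
  have hmain : ∫⁻ y : EuclideanSpace ℝ (Fin n),
      ENNReal.ofReal (‖y‖ ^ (α - (n:ℝ)) * ‖x - y‖ ^ (β - (n:ℝ))) =
      ENNReal.ofReal (π ^ a / Real.Gamma a * (π ^ b / Real.Gamma b) *
        (Real.Gamma c * π ^ (-c) * (‖x‖^2) ^ (-c) *
          (Real.Gamma (α/2) * Real.Gamma (β/2) / Real.Gamma ((α+β)/2)))) := by
    rw [step1, step2, step3, step4, ← ENNReal.ofReal_mul (by positivity),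
      ← ENNReal.ofReal_mul (by positivity), mul_assoc]
  -- identify the constant
  have hconst : gconst n α * gconst n β / gconst n (α+β) * ‖x‖ ^ (α + β - (n:ℝ)) =
      π ^ a / Real.Gamma a * (π ^ b / Real.Gamma b) *
        (Real.Gamma c * π ^ (-c) * (‖x‖^2) ^ (-c) *
          (Real.Gamma (α/2) * Real.Gamma (β/2) / Real.Gamma ((α+β)/2))) := by
    have hxpow : (‖x‖^2 : ℝ) ^ (-c) = ‖x‖ ^ (α + β - (n:ℝ)) := by
      rw [← Real.rpow_natCast ‖x‖ 2, ← Real.rpow_mul (norm_nonneg x)]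
      congr 1
      rw [hc_def]; push_cast; ring
    have hπab : π ^ a * π ^ b = π ^ ((n:ℝ)/2) * π ^ c := by
      rw [← Real.rpow_add hπ, ← Real.rpow_add hπ]
      congr 1
      rw [ha_def, hb_def, hc_def]; ring
    have h2ab : (2:ℝ) ^ (α+β) = 2 ^ α * 2 ^ β := Real.rpow_add two_pos α β
    have hπa : (0:ℝ) < π ^ a := Real.rpow_pos_of_pos hπ a
    have hπb : (0:ℝ) < π ^ b := Real.rpow_pos_of_pos hπ b
    have hπc : (0:ℝ) < π ^ c := Real.rpow_pos_of_pos hπ c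
    have hπn : (0:ℝ) < π ^ ((n:ℝ)/2) := Real.rpow_pos_of_pos hπ _
    have h2α : (0:ℝ) < (2:ℝ) ^ α := Real.rpow_pos_of_pos two_pos α
    have h2β : (0:ℝ) < (2:ℝ) ^ β := Real.rpow_pos_of_pos two_pos β
    rw [hxpow, Real.rpow_neg hπ.le]
    unfold gconst
    rw [← ha_def, ← hb_def, show ((n:ℝ) - (α+β))/2 = c from by rw [hc_def]; ring, h2ab]
    field_simp
    linear_combination (-1 : ℝ) * hπab
  -- convert the Bochner integral
  have hnn : 0 ≤ π ^ a / Real.Gamma a * (π ^ b / Real.Gamma b) *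
        (Real.Gamma c * π ^ (-c) * (‖x‖^2) ^ (-c) *
          (Real.Gamma (α/2) * Real.Gamma (β/2) / Real.Gamma ((α+β)/2))) := by positivity
  rw [show (fun y : EuclideanSpace ℝ (Fin n) => ‖y‖ ^ (α - (n:ℝ)) / ‖x - y‖ ^ ((n:ℝ) - β)) =
      fun y : EuclideanSpace ℝ (Fin n) => ‖y‖ ^ (α - (n:ℝ)) * ‖x - y‖ ^ (β - (n:ℝ)) from
    funext fun y => by
      rw [show β - (n:ℝ) = -((n:ℝ) - β) by ring, Real.rpow_neg (norm_nonneg _), div_eq_mul_inv]]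
  rw [integral_eq_lintegral_of_nonneg_ae (ae_of_all _ fun y => by positivity)
    ((by fun_prop : Measurable fun y : EuclideanSpace ℝ (Fin n) =>
      ‖y‖ ^ (α - (n:ℝ)) * ‖x - y‖ ^ (β - (n:ℝ))).aestronglyMeasurable),
    hmain, ENNReal.toReal_ofReal hnn]
  exact hconst.symm
end

section
/- Let $a,b>0$, $m>0$, $\gamma\in(0,1)$. Then $|a^{-m}-b^{-m}| \le m\left(\frac{1-\gamma}{m+\gamma}\right)^{1-\gamma}|a-b|^{\gamma}\,(a^{-m-\gamma}+b^{-m-\gamma})$. -/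
open Real Set

/-- Weighted AM-GM core: `m*u ≤ C * u^γ * (γ + (m+γ)*u)` where
`C = m * ((1-γ)/(m+γ))^(1-γ)`. -/
private lemma amgm_aux {m γ u : ℝ} (hm : 0 < m) (hγ0 : 0 < γ) (hγ1 : γ < 1) (hu : 0 ≤ u) :
    m * u ≤ m * ((1 - γ) / (m + γ)) ^ (1 - γ) * u ^ γ * (γ + (m + γ) * u) := by
  have hmγ : 0 < m + γ := by linarith
  have hκ : 0 < (1 - γ) / (m + γ) := div_pos (by linarith) hmγ
  set κ : ℝ := (1 - γ) / (m + γ) with hκdef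
  rcases eq_or_lt_of_le hu with rfl | hu'
  · simp [Real.zero_rpow (ne_of_gt hγ0)]
  · have key : u ^ (1 - γ) ≤ κ ^ (1 - γ) * (γ + (m + γ) * u) := by
      have h := Real.geom_mean_le_arith_mean2_weighted (by linarith : (0:ℝ) ≤ 1 - γ) hγ0.le
        (by positivity : (0:ℝ) ≤ u / κ) zero_le_one (by ring)
      have h1 : (u / κ) ^ (1 - γ) ≤ (1 - γ) * (u / κ) + γ := by
        simpa using h
      have h2 : u ^ (1 - γ) = κ ^ (1 - γ) * (u / κ) ^ (1 - γ) := by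
        rw [← Real.mul_rpow hκ.le (by positivity)]
        rw [mul_div_cancel₀ _ (ne_of_gt hκ)]
      have h3 : (1 - γ) * (u / κ) = (m + γ) * u := by
        have hne1 : (1:ℝ) - γ ≠ 0 := by linarith
        have hne2 : m + γ ≠ 0 := ne_of_gt hmγ
        rw [hκdef]
        field_simp
      calc u ^ (1 - γ) = κ ^ (1 - γ) * (u / κ) ^ (1 - γ) := h2
        _ ≤ κ ^ (1 - γ) * ((1 - γ) * (u / κ) + γ) :=
            mul_le_mul_of_nonneg_left h1 (Real.rpow_nonneg hκ.le _)
        _ = κ ^ (1 - γ) * (γ + (m + γ) * u) := by rw [h3]; ring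
    have hsplit : m * u = (m * u ^ γ) * u ^ (1 - γ) := by
      rw [mul_assoc, ← Real.rpow_add hu' γ (1 - γ)]
      norm_num
    calc m * u = (m * u ^ γ) * u ^ (1 - γ) := hsplit
      _ ≤ (m * u ^ γ) * (κ ^ (1 - γ) * (γ + (m + γ) * u)) := by
          apply mul_le_mul_of_nonneg_left key
          have := Real.rpow_nonneg hu γ
          positivity
      _ = m * κ ^ (1 - γ) * u ^ γ * (γ + (m + γ) * u) := by ring

/-- Key one-variable inequality: `1 - (1+u)^(-m) ≤ m * ((1-γ)/(m+γ))^(1-γ) * u^γ`. -/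
private lemma key_aux {m γ : ℝ} (hm : 0 < m) (hγ0 : 0 < γ) (hγ1 : γ < 1) :
    ∀ u : ℝ, 0 ≤ u → 1 - (1 + u) ^ (-m) ≤ m * ((1 - γ) / (m + γ)) ^ (1 - γ) * u ^ γ := by
  have hmγ : 0 < m + γ := by linarith
  have hκ : 0 < (1 - γ) / (m + γ) := div_pos (by linarith) hmγ
  set C : ℝ := m * ((1 - γ) / (m + γ)) ^ (1 - γ) with hCdef
  have hC : 0 < C := mul_pos hm (Real.rpow_pos_of_pos hκ _)
  have amgm : ∀ u : ℝ, 0 ≤ u → m * u ≤ C * u ^ γ * (γ + (m + γ) * u) := by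
    intro u hu
    have := amgm_aux hm hγ0 hγ1 hu
    rw [← hCdef] at this
    exact this
  set ψ : ℝ → ℝ := fun u => C * u ^ γ + ((1 + u) ^ (-m) - 1) with hψdef
  set G : ℝ → ℝ := fun u => γ * (1 + u) + m * u - γ * (1 + u) ^ (m + 1) with hGdef
  -- Step A : on the set where G ≥ 0, the inequality holds pointwise.
  have stepA : ∀ u : ℝ, 0 ≤ u → 0 ≤ G u → 1 - (1 + u) ^ (-m) ≤ C * u ^ γ := by
    intro u hu hG
    have hx : (0:ℝ) < 1 + u := by linarith
    have hd : (0:ℝ) < γ + (m + γ) * u := by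
      have : 0 ≤ (m + γ) * u := mul_nonneg hmγ.le hu
      linarith
    have hxm1 : (0:ℝ) < (1 + u) ^ (m + 1) := Real.rpow_pos_of_pos hx _
    have hGu : 0 ≤ γ * (1 + u) + m * u - γ * (1 + u) ^ (m + 1) := hG
    have hGup : γ * (1 + u) ^ (m + 1) ≤ γ + (m + γ) * u := by nlinarith
    have hrep : (1 + u) ^ (-m) = (1 + u) / (1 + u) ^ (m + 1) := by
      rw [eq_div_iff (ne_of_gt hxm1), ← Real.rpow_add hx]
      norm_num
    have hlow : γ * (1 + u) / (γ + (m + γ) * u) ≤ (1 + u) ^ (-m) := by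
      rw [hrep, div_le_div_iff₀ hd hxm1]
      nlinarith [mul_le_mul_of_nonneg_left hGup (le_of_lt hx)]
    have hident : 1 - γ * (1 + u) / (γ + (m + γ) * u) = m * u / (γ + (m + γ) * u) := by
      field_simp
      ring
    have hfin : m * u / (γ + (m + γ) * u) ≤ C * u ^ γ := by
      rw [div_le_iff₀ hd]
      exact amgm u hu
    linarith
  -- Step B : where G < 0, the derivative of ψ is nonnegative.
  have stepB : ∀ u : ℝ, 0 < u → G u < 0 →
      0 ≤ C * (γ * u ^ (γ - 1)) + 1 * -m * (1 + u) ^ (-m - 1) := by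
    intro u hu hG
    have hx : (0:ℝ) < 1 + u := by linarith
    have hd : (0:ℝ) < γ + (m + γ) * u := by
      have : 0 ≤ (m + γ) * u := mul_nonneg hmγ.le hu.le
      linarith
    have hxm1 : (0:ℝ) < (1 + u) ^ (m + 1) := Real.rpow_pos_of_pos hx _
    have hGu : γ * (1 + u) + m * u - γ * (1 + u) ^ (m + 1) < 0 := hG
    have hGlow : γ + (m + γ) * u ≤ γ * (1 + u) ^ (m + 1) := by nlinarith
    have hrep : (1 + u) ^ (-m - 1) = 1 / (1 + u) ^ (m + 1) := by
      rw [eq_div_iff (ne_of_gt hxm1), ← Real.rpow_add hx]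
      norm_num
    have h0 : (1 + u) ^ (-m - 1) ≤ γ / (γ + (m + γ) * u) := by
      rw [hrep, div_le_div_iff₀ hxm1 hd]
      nlinarith
    have hsub : u ^ (γ - 1) = u ^ γ / u := Real.rpow_sub_one (ne_of_gt hu) γ
    have hm2 : m ≤ C * u ^ (γ - 1) * (γ + (m + γ) * u) := by
      have h1 := amgm u hu.le
      have hrw : C * u ^ (γ - 1) * (γ + (m + γ) * u) = C * u ^ γ * (γ + (m + γ) * u) / u := by
        rw [hsub]; ring
      rw [hrw, le_div_iff₀ hu]
      linarith
    have h2 : m * γ / (γ + (m + γ) * u) ≤ γ * (C * u ^ (γ - 1)) := by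
      rw [div_le_iff₀ hd]
      nlinarith
    have h3 : m * (1 + u) ^ (-m - 1) ≤ γ * (C * u ^ (γ - 1)) := by
      calc m * (1 + u) ^ (-m - 1) ≤ m * (γ / (γ + (m + γ) * u)) :=
            mul_le_mul_of_nonneg_left h0 hm.le
        _ = m * γ / (γ + (m + γ) * u) := by ring
        _ ≤ γ * (C * u ^ (γ - 1)) := h2
    nlinarith
  -- derivative of ψ at positive points
  have dAt : ∀ x : ℝ, 0 < x →
      HasDerivAt ψ (C * (γ * x ^ (γ - 1)) + 1 * -m * (1 + x) ^ (-m - 1)) x := by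
    intro x hx
    have d1 : HasDerivAt (fun v : ℝ => v ^ γ) (γ * x ^ (γ - 1)) x :=
      Real.hasDerivAt_rpow_const (Or.inl (ne_of_gt hx))
    have d2 : HasDerivAt (fun v : ℝ => 1 + v) 1 x := by
      simpa using (hasDerivAt_id x).const_add (1 : ℝ)
    have d3 : HasDerivAt (fun v : ℝ => (1 + v) ^ (-m)) (1 * -m * (1 + x) ^ (-m - 1)) x :=
      d2.rpow_const (Or.inl (by positivity))
    exact (d1.const_mul C).add (d3.sub_const 1)
  -- Main argument
  intro U hU
  have hψ0 : ∀ u : ℝ, 0 ≤ u → 0 ≤ G u → 0 ≤ ψ u := by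
    intro u hu hG
    have := stepA u hu hG
    simp only [hψdef]
    linarith
  have hGcont : Continuous G := by
    have hc : Continuous fun u : ℝ => 1 + u := continuous_const.add continuous_id
    have hpow : Continuous fun u : ℝ => (1 + u) ^ (m + 1) :=
      hc.rpow_const (fun x => Or.inr (by linarith))
    rw [hGdef]
    exact ((continuous_const.mul hc).add (continuous_const.mul continuous_id)).sub
      (continuous_const.mul hpow)
  set S : Set ℝ := Icc 0 U ∩ {u | 0 ≤ G u} with hSdef
  have hScompact : IsCompact S :=
    isCompact_Icc.inter_right (isClosed_le continuous_const hGcont)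
  have hS0 : (0:ℝ) ∈ S := by
    constructor
    · exact ⟨le_refl 0, hU⟩
    · show 0 ≤ G 0
      simp [hGdef, Real.one_rpow]
  have hSne : S.Nonempty := ⟨0, hS0⟩
  have hsS : sSup S ∈ S := hScompact.sSup_mem hSne
  set s : ℝ := sSup S with hsdef
  obtain ⟨⟨hs0, hsU⟩, hsG⟩ := hsS
  have hψs : 0 ≤ ψ s := hψ0 s hs0 hsG
  have hGneg : ∀ u : ℝ, s < u → u ≤ U → G u < 0 := by
    intro u hsu huU
    by_contra h
    push_neg at h
    have hmem : u ∈ S := ⟨⟨le_trans hs0 hsu.le, huU⟩, h⟩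
    have := le_csSup hScompact.bddAbove hmem
    rw [← hsdef] at this
    linarith
  have hmono : MonotoneOn ψ (Icc s U) := by
    apply monotoneOn_of_deriv_nonneg (convex_Icc s U)
    · -- ContinuousOn
      simp only [hψdef]
      apply ContinuousOn.add
      · exact continuousOn_const.mul
          (fun x _ => (Real.continuousAt_rpow_const x γ (Or.inr hγ0.le)).continuousWithinAt)
      · apply ContinuousOn.sub _ continuousOn_const
        apply ContinuousOn.rpow_const (continuous_const.add continuous_id).continuousOn
        intro x hx
        have hx0 : (0:ℝ) ≤ x := le_trans hs0 hx.1
        exact Or.inl (by linarith : (0:ℝ) < 1 + x).ne'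
    · rw [interior_Icc]
      intro x hx
      have hx0 : 0 < x := lt_of_le_of_lt hs0 hx.1
      exact (dAt x hx0).differentiableAt.differentiableWithinAt
    · rw [interior_Icc]
      intro x hx
      have hx0 : 0 < x := lt_of_le_of_lt hs0 hx.1
      rw [(dAt x hx0).deriv]
      exact stepB x hx0 (hGneg x hx.1 hx.2.le)
  have hle : ψ s ≤ ψ U := hmono ⟨le_refl s, hsU⟩ ⟨hsU, le_refl U⟩ hsU
  have : 0 ≤ ψ U := le_trans hψs hle
  simp only [hψdef] at this
  linarith

/-- The main inequality for ordered arguments. -/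
private lemma half_aux {a b m γ : ℝ} (ha : 0 < a) (hb : 0 < b) (hm : 0 < m)
    (hγ0 : 0 < γ) (hγ1 : γ < 1) (hab : a ≤ b) :
    a ^ (-m) - b ^ (-m) ≤
      m * ((1 - γ) / (m + γ)) ^ (1 - γ) * (b - a) ^ γ * (a ^ (-(m + γ)) + b ^ (-(m + γ))) := by
  have hmγ : 0 < m + γ := by linarith
  have hκ : 0 < (1 - γ) / (m + γ) := div_pos (by linarith) hmγ
  set C : ℝ := m * ((1 - γ) / (m + γ)) ^ (1 - γ) with hCdef
  have hC : 0 < C := mul_pos hm (Real.rpow_pos_of_pos hκ _)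
  have hu : 0 ≤ (b - a) / a := div_nonneg (by linarith) ha.le
  have hkey := key_aux hm hγ0 hγ1 ((b - a) / a) hu
  rw [← hCdef] at hkey
  have hx : 1 + (b - a) / a = b / a := by field_simp; ring
  rw [hx] at hkey
  have e1 : (b / a) ^ (-m) = b ^ (-m) / a ^ (-m) := Real.div_rpow hb.le ha.le _
  have e2 : ((b - a) / a) ^ γ = (b - a) ^ γ / a ^ γ := Real.div_rpow (by linarith) ha.le γ
  rw [e1, e2] at hkey
  have ham : 0 < a ^ (-m) := Real.rpow_pos_of_pos ha _
  have haγ : 0 < a ^ γ := Real.rpow_pos_of_pos ha _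
  have h3 : a ^ (-m) - b ^ (-m) ≤ C * (b - a) ^ γ * (a ^ (-m) / a ^ γ) := by
    calc a ^ (-m) - b ^ (-m) = a ^ (-m) * (1 - b ^ (-m) / a ^ (-m)) := by
          field_simp
      _ ≤ a ^ (-m) * (C * ((b - a) ^ γ / a ^ γ)) := mul_le_mul_of_nonneg_left hkey ham.le
      _ = C * (b - a) ^ γ * (a ^ (-m) / a ^ γ) := by ring
  have e3 : a ^ (-m) / a ^ γ = a ^ (-(m + γ)) := by
    rw [← Real.rpow_sub ha]
    congr 1
    ring
  rw [e3] at h3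
  have hb' : 0 < b ^ (-(m + γ)) := Real.rpow_pos_of_pos hb _
  have hbγ : 0 ≤ (b - a) ^ γ := Real.rpow_nonneg (by linarith) _
  calc a ^ (-m) - b ^ (-m) ≤ C * (b - a) ^ γ * a ^ (-(m + γ)) := h3
    _ ≤ C * (b - a) ^ γ * (a ^ (-(m + γ)) + b ^ (-(m + γ))) := by
        apply mul_le_mul_of_nonneg_left (by linarith) (mul_nonneg hC.le hbγ)

theorem stmt8 (a b m γ : ℝ) (ha : 0 < a) (hb : 0 < b) (hm : 0 < m)
    (hγ0 : 0 < γ) (hγ1 : γ < 1) :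
    |a ^ (-m) - b ^ (-m)| ≤
      m * ((1 - γ) / (m + γ)) ^ (1 - γ) * |a - b| ^ γ *
        (a ^ (-(m + γ)) + b ^ (-(m + γ))) := by
  rcases le_total a b with hab | hab
  · have h1 : b ^ (-m) ≤ a ^ (-m) := Real.rpow_le_rpow_of_nonpos ha hab (by linarith)
    rw [abs_of_nonneg (by linarith : (0:ℝ) ≤ a ^ (-m) - b ^ (-m)),
      abs_of_nonpos (by linarith : a - b ≤ 0), neg_sub]
    exact half_aux ha hb hm hγ0 hγ1 hab
  · have h1 : a ^ (-m) ≤ b ^ (-m) := Real.rpow_le_rpow_of_nonpos hb hab (by linarith)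
    rw [abs_of_nonpos (by linarith : a ^ (-m) - b ^ (-m) ≤ 0),
      abs_of_nonneg (by linarith : (0:ℝ) ≤ a - b), neg_sub]
    have h := half_aux hb ha hm hγ0 hγ1 hab
    have e : m * ((1 - γ) / (m + γ)) ^ (1 - γ) * (a - b) ^ γ *
          (b ^ (-(m + γ)) + a ^ (-(m + γ))) =
        m * ((1 - γ) / (m + γ)) ^ (1 - γ) * (a - b) ^ γ *
          (a ^ (-(m + γ)) + b ^ (-(m + γ))) := by ring
    linarith [h, e.ge]
end

section
/- Let $n\ge 2$, $0<\lambda<n$, $1\le q<\infty$, $\beta<n/q$, $\alpha<1$, $\alpha+\beta>0$, $1/q=1+(\alpha+\beta-\lambda)/n$. Then $\int_{|x|\le 4|y|}\frac{|x|^{-\beta q}}{|x-y|^{(n-\lambda)q}}\,dx \le C\,|y|^{\alpha q}$ for all $y\neq 0$, with $C$ independent of $y$. -/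
open MeasureTheory Metric Set Real

lemma lemA {n : ℕ} (hn : 1 ≤ n) {a : ℝ} (ha : a < n) {R : ℝ} (hR : 0 < R) :
    ∫⁻ x in closedBall (0 : EuclideanSpace ℝ (Fin n)) R,
      ENNReal.ofReal (‖x‖ ^ (-a)) < ⊤ := by
  rcases le_or_gt a 0 with h0 | h0
  · calc ∫⁻ x in closedBall (0 : EuclideanSpace ℝ (Fin n)) R, ENNReal.ofReal (‖x‖ ^ (-a))
        ≤ ∫⁻ _x in closedBall (0 : EuclideanSpace ℝ (Fin n)) R, ENNReal.ofReal (R ^ (-a)) := by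
          refine setLIntegral_mono measurable_const fun x hx => ?_
          refine ENNReal.ofReal_le_ofReal (Real.rpow_le_rpow (norm_nonneg _) ?_ (by linarith))
          simpa [dist_zero_right] using hx
      _ = ENNReal.ofReal (R ^ (-a)) * volume (closedBall (0 : EuclideanSpace ℝ (Fin n)) R) := by
          simp [mul_comm]
      _ < ⊤ := ENNReal.mul_lt_top ENNReal.ofReal_lt_top measure_closedBall_lt_top
  · set μ := volume.restrict (closedBall (0 : EuclideanSpace ℝ (Fin n)) R) with hμ
    have hmble : AEMeasurable (fun x : EuclideanSpace ℝ (Fin n) => ‖x‖ ^ (-a)) μ :=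
      (by fun_prop : Measurable fun x : EuclideanSpace ℝ (Fin n) => ‖x‖ ^ (-a)).aemeasurable
    rw [lintegral_eq_lintegral_meas_le μ
      (Filter.Eventually.of_forall fun x => Real.rpow_nonneg (norm_nonneg _) _) hmble]
    have hsplit : Set.Ioi (0:ℝ) = Set.Ioc (0:ℝ) 1 ∪ Set.Ioi 1 := by
      rw [Set.Ioc_union_Ioi_eq_Ioi zero_le_one]
    rw [hsplit, lintegral_union measurableSet_Ioi (Set.Ioc_disjoint_Ioi le_rfl)]
    have h1 : ∫⁻ t in Set.Ioc (0:ℝ) 1, μ {x | t ≤ ‖x‖ ^ (-a)} < ⊤ := by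
      calc ∫⁻ t in Set.Ioc (0:ℝ) 1, μ {x | t ≤ ‖x‖ ^ (-a)}
          ≤ ∫⁻ _t in Set.Ioc (0:ℝ) 1,
              volume (closedBall (0 : EuclideanSpace ℝ (Fin n)) R) := by
            refine lintegral_mono fun t => ?_
            refine le_trans (measure_mono (Set.subset_univ _)) ?_
            rw [hμ, Measure.restrict_apply_univ]
        _ < ⊤ := by
            rw [setLIntegral_const]
            exact ENNReal.mul_lt_top measure_closedBall_lt_top (by simp)
    have h2 : ∫⁻ t in Set.Ioi (1:ℝ), μ {x | t ≤ ‖x‖ ^ (-a)} < ⊤ := by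
      have hbound : ∀ t ∈ Set.Ioi (1:ℝ), μ {x | t ≤ ‖x‖ ^ (-a)} ≤
          ENNReal.ofReal (t ^ (-(a⁻¹ * n))) *
            volume (ball (0 : EuclideanSpace ℝ (Fin n)) 1) := by
        intro t ht
        have ht1 : (1:ℝ) < t := ht
        have ht0 : (0:ℝ) < t := lt_trans one_pos ht1
        have hsub : {x : EuclideanSpace ℝ (Fin n) | t ≤ ‖x‖ ^ (-a)} ⊆
            closedBall 0 (t ^ (-a⁻¹)) := by
          intro x hx
          simp only [Set.mem_setOf_eq] at hx
          rcases eq_or_ne x 0 with rfl | hx0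
          · simp only [norm_zero] at hx
            rw [Real.zero_rpow (neg_ne_zero.mpr h0.ne')] at hx
            linarith
          · have hnx : 0 < ‖x‖ := norm_pos_iff.mpr hx0
            have key : (‖x‖ ^ (-a)) ^ (-a⁻¹) ≤ t ^ (-a⁻¹) :=
              Real.rpow_le_rpow_of_nonpos ht0 hx (neg_nonpos.mpr (inv_nonneg.mpr h0.le))
            rw [← Real.rpow_mul hnx.le, neg_mul_neg, mul_inv_cancel₀ h0.ne',
              Real.rpow_one] at key
            simpa [mem_closedBall, dist_zero_right] using key
        calc μ {x | t ≤ ‖x‖ ^ (-a)}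
            ≤ μ (closedBall 0 (t ^ (-a⁻¹))) := measure_mono hsub
          _ ≤ volume (closedBall (0 : EuclideanSpace ℝ (Fin n)) (t ^ (-a⁻¹))) :=
              Measure.restrict_le_self _
          _ = ENNReal.ofReal ((t ^ (-a⁻¹)) ^ Module.finrank ℝ (EuclideanSpace ℝ (Fin n))) *
              volume (ball (0 : EuclideanSpace ℝ (Fin n)) 1) :=
              Measure.addHaar_closedBall _ _ (Real.rpow_nonneg ht0.le _)
          _ = ENNReal.ofReal (t ^ (-(a⁻¹ * n))) *
              volume (ball (0 : EuclideanSpace ℝ (Fin n)) 1) := by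
              rw [finrank_euclideanSpace_fin, ← Real.rpow_natCast (t ^ (-a⁻¹)) n,
                ← Real.rpow_mul ht0.le]
              ring_nf
      calc ∫⁻ t in Set.Ioi (1:ℝ), μ {x | t ≤ ‖x‖ ^ (-a)}
          ≤ ∫⁻ t in Set.Ioi (1:ℝ), ENNReal.ofReal (t ^ (-(a⁻¹ * n))) *
              volume (ball (0 : EuclideanSpace ℝ (Fin n)) 1) :=
            setLIntegral_mono' measurableSet_Ioi hbound
        _ = (∫⁻ t in Set.Ioi (1:ℝ), ENNReal.ofReal (t ^ (-(a⁻¹ * n)))) *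
              volume (ball (0 : EuclideanSpace ℝ (Fin n)) 1) := by
            rw [lintegral_mul_const]
            fun_prop
        _ < ⊤ := by
            refine ENNReal.mul_lt_top ?_ measure_ball_lt_top
            have hint : IntegrableOn (fun t : ℝ => t ^ (-(a⁻¹ * n)))
                (Set.Ioi (1:ℝ)) volume := by
              refine integrableOn_Ioi_rpow_of_lt ?_ one_pos
              have : 1 < a⁻¹ * n := by
                rw [← div_eq_inv_mul]
                exact (one_lt_div h0).mpr ha
              linarith
            calc ∫⁻ t in Set.Ioi (1:ℝ), ENNReal.ofReal (t ^ (-(a⁻¹ * n)))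
                ≤ ∫⁻ t in Set.Ioi (1:ℝ), (‖(fun t : ℝ => t ^ (-(a⁻¹ * n))) t‖₊ : ENNReal) := by
                  refine lintegral_mono fun t => ?_
                  rw [← enorm_eq_nnnorm, ← ofReal_norm]
                  exact ENNReal.ofReal_le_ofReal (le_abs_self _)
              _ < ⊤ := hint.hasFiniteIntegral
    exact ENNReal.add_lt_top.mpr ⟨h1, h2⟩

theorem stmt13 {n : ℕ} (hn : 2 ≤ n) (lam α β q : ℝ) (hl0 : 0 < lam) (hln : lam < n)
    (hq1 : 1 ≤ q) (hβ : β < n / q) (hα : α < 1) (hαβ : 0 < α + β)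
    (hscal : 1 / q = 1 + (α + β - lam) / n) :
    ∃ C > (0 : ℝ), ∀ y : EuclideanSpace ℝ (Fin n), y ≠ 0 →
      ∫⁻ x in {x : EuclideanSpace ℝ (Fin n) | ‖x‖ ≤ 4 * ‖y‖},
          ENNReal.ofReal (‖x‖ ^ (-(β * q)) / ‖x - y‖ ^ (((n : ℝ) - lam) * q)) ≤
        ENNReal.ofReal (C * ‖y‖ ^ (α * q)) := by
  classical
  set E := EuclideanSpace ℝ (Fin n)
  have hq0 : (0:ℝ) < q := lt_of_lt_of_le one_pos hq1
  have hn0 : (0:ℝ) < n := by exact_mod_cast lt_of_lt_of_le two_pos hn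
  set b : ℝ := ((n:ℝ) - lam) * q with hbdef
  have hb0 : 0 < b := mul_pos (by linarith) hq0
  -- scaling identity: n = n q + (α+β-lam) q
  have hid : (n:ℝ) = n * q + (α + β - lam) * q := by
    have h := hscal
    field_simp at h
    nlinarith [h]
  have hexp : (n:ℝ) - β * q - b = α * q := by rw [hbdef]; nlinarith [hid]
  have hbn : b < n := by nlinarith [mul_pos hαβ hq0, hid]
  have hβq : β * q < n := by
    have h := (lt_div_iff₀ hq0).mp hβ
    linarith
  -- the fixed constants
  set c₂ : ℝ := max ((2:ℝ)⁻¹ ^ (-(β * q))) ((4:ℝ) ^ (-(β * q))) with hc₂def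
  have hc₂0 : 0 < c₂ := lt_max_iff.mpr (Or.inl (Real.rpow_pos_of_pos (by norm_num) _))
  set J₁ : ENNReal := ∫⁻ u in Metric.closedBall (0:E) 4, ENNReal.ofReal (‖u‖ ^ (-(β*q)))
    with hJ₁def
  set J₂ : ENNReal := ∫⁻ v in Metric.closedBall (0:E) 5, ENNReal.ofReal (‖v‖ ^ (-b))
    with hJ₂def
  have hJ₁ : J₁ < ⊤ := lemA (le_trans one_le_two hn) hβq (by norm_num)
  have hJ₂ : J₂ < ⊤ := lemA (le_trans one_le_two hn) hbn (by norm_num)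
  set M : ENNReal := ENNReal.ofReal ((2:ℝ) ^ b) * J₁ + ENNReal.ofReal c₂ * J₂ with hMdef
  have hM : M ≠ ⊤ := by
    rw [hMdef]
    exact (ENNReal.add_lt_top.mpr ⟨ENNReal.mul_lt_top ENNReal.ofReal_lt_top hJ₁,
      ENNReal.mul_lt_top ENNReal.ofReal_lt_top hJ₂⟩).ne
  have hG : ∀ e : E, ‖e‖ = 1 →
      ∫⁻ u in Metric.closedBall (0:E) 4,
        ENNReal.ofReal (‖u‖ ^ (-(β*q)) / ‖u - e‖ ^ b) ≤ M := by
    intro e he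
    have hpt : ∀ u ∈ Metric.closedBall (0:E) 4,
        ENNReal.ofReal (‖u‖ ^ (-(β*q)) / ‖u - e‖ ^ b) ≤
          ENNReal.ofReal ((2:ℝ)^b * ‖u‖ ^ (-(β*q))) +
          (Metric.closedBall (0:E) 5).indicator
            (fun v => ENNReal.ofReal (c₂ * ‖v‖ ^ (-b))) (u - e) := by
      intro u hu
      have hu4 : ‖u‖ ≤ 4 := by simpa [Metric.mem_closedBall, dist_zero_right] using hu
      rcases le_or_gt ‖u‖ 2⁻¹ with hcase | hcase
      · have hue : (2:ℝ)⁻¹ ≤ ‖u - e‖ := by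
          have h1 := abs_norm_sub_norm_le u e
          rw [he] at h1
          have h2 : 1 - ‖u‖ ≤ |‖u‖ - 1| := by
            rw [abs_sub_comm]; exact le_abs_self _
          linarith
        have hdpos : (0:ℝ) < (2:ℝ)⁻¹ ^ b := Real.rpow_pos_of_pos (by norm_num) _
        have hd : (2:ℝ)⁻¹ ^ b ≤ ‖u - e‖ ^ b := Real.rpow_le_rpow (by norm_num) hue hb0.le
        have hkey : ‖u‖ ^ (-(β*q)) / ‖u - e‖ ^ b ≤ (2:ℝ)^b * ‖u‖ ^ (-(β*q)) := by
          calc ‖u‖ ^ (-(β*q)) / ‖u - e‖ ^ b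
              ≤ ‖u‖ ^ (-(β*q)) / (2:ℝ)⁻¹ ^ b := by
                gcongr
            _ = (2:ℝ)^b * ‖u‖ ^ (-(β*q)) := by
                rw [Real.inv_rpow (by norm_num : (0:ℝ) ≤ 2), div_eq_mul_inv, inv_inv,
                  mul_comm]
        exact le_trans (ENNReal.ofReal_le_ofReal hkey) le_self_add
      · have hnum : ‖u‖ ^ (-(β*q)) ≤ c₂ := by
          rcases le_or_gt 0 (-(β*q)) with hs | hs
          · exact le_trans (Real.rpow_le_rpow (norm_nonneg _) hu4 hs) (le_max_right _ _)
          · exact le_trans (Real.rpow_le_rpow_of_nonpos (by norm_num) hcase.le hs.le)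
              (le_max_left _ _)
        have hmem : u - e ∈ Metric.closedBall (0:E) 5 := by
          simp only [Metric.mem_closedBall, dist_zero_right]
          calc ‖u - e‖ ≤ ‖u‖ + ‖e‖ := norm_sub_le u e
            _ ≤ 5 := by rw [he]; linarith
        rw [Set.indicator_of_mem hmem]
        refine le_trans ?_ le_add_self
        refine ENNReal.ofReal_le_ofReal ?_
        rcases eq_or_lt_of_le (norm_nonneg (u - e)) with h0 | h0
        · rw [← h0, Real.zero_rpow hb0.ne', div_zero]
          positivity
        · rw [Real.rpow_neg (norm_nonneg (u - e)) b, ← div_eq_mul_inv]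
          exact (div_le_div_iff_of_pos_right (Real.rpow_pos_of_pos h0 _)).mpr hnum
    calc ∫⁻ u in Metric.closedBall (0:E) 4,
            ENNReal.ofReal (‖u‖ ^ (-(β*q)) / ‖u - e‖ ^ b)
        ≤ ∫⁻ u in Metric.closedBall (0:E) 4,
            (ENNReal.ofReal ((2:ℝ)^b * ‖u‖ ^ (-(β*q))) +
             (Metric.closedBall (0:E) 5).indicator
               (fun v => ENNReal.ofReal (c₂ * ‖v‖ ^ (-b))) (u - e)) :=
          setLIntegral_mono' measurableSet_closedBall hpt
      _ = (∫⁻ u in Metric.closedBall (0:E) 4, ENNReal.ofReal ((2:ℝ)^b * ‖u‖ ^ (-(β*q)))) +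
          ∫⁻ u in Metric.closedBall (0:E) 4,
            (Metric.closedBall (0:E) 5).indicator
              (fun v => ENNReal.ofReal (c₂ * ‖v‖ ^ (-b))) (u - e) :=
          lintegral_add_left (by fun_prop) _
      _ ≤ M := by
          rw [hMdef]
          refine add_le_add (le_of_eq ?_) ?_
          · simp_rw [ENNReal.ofReal_mul (Real.rpow_nonneg (by norm_num : (0:ℝ) ≤ 2) b)]
            rw [lintegral_const_mul _ (by fun_prop)]
          · calc ∫⁻ u in Metric.closedBall (0:E) 4,
                  (Metric.closedBall (0:E) 5).indicator
                    (fun v => ENNReal.ofReal (c₂ * ‖v‖ ^ (-b))) (u - e)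
                ≤ ∫⁻ u, (Metric.closedBall (0:E) 5).indicator
                    (fun v => ENNReal.ofReal (c₂ * ‖v‖ ^ (-b))) (u - e) :=
                  setLIntegral_le_lintegral _ _
              _ = ∫⁻ v, (Metric.closedBall (0:E) 5).indicator
                    (fun v => ENNReal.ofReal (c₂ * ‖v‖ ^ (-b))) v := by
                  simp_rw [sub_eq_add_neg]
                  exact lintegral_add_right_eq_self _ (-e)
              _ = ∫⁻ v in Metric.closedBall (0:E) 5, ENNReal.ofReal (c₂ * ‖v‖ ^ (-b)) :=
                  lintegral_indicator measurableSet_closedBall _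
              _ = ENNReal.ofReal c₂ * J₂ := by
                  simp_rw [ENNReal.ofReal_mul hc₂0.le]
                  rw [lintegral_const_mul _ (by fun_prop), hJ₂def]
  refine ⟨M.toReal + 1, by positivity, fun y hy => ?_⟩
  have hR : 0 < ‖y‖ := norm_pos_iff.mpr hy
  set R : ℝ := ‖y‖ with hRdef
  set e : E := R⁻¹ • y with hedef
  have he : ‖e‖ = 1 := by
    rw [hedef, norm_smul, Real.norm_eq_abs, abs_of_pos (inv_pos.mpr hR), ← hRdef]
    field_simp
  have hye : y = R • e := by
    rw [hedef, smul_smul, mul_inv_cancel₀ hR.ne', one_smul]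
  set f : E → ENNReal := fun x => ENNReal.ofReal (‖x‖ ^ (-(β*q)) / ‖x - y‖ ^ b) with hfdef
  have hfm : Measurable f := by
    rw [hfdef]; fun_prop
  have hset : {x : E | ‖x‖ ≤ 4 * R} = Metric.closedBall (0:E) (4*R) := by
    ext x; simp [dist_zero_right]
  have hmap : Measure.map (fun x : E => R • x) volume =
      ENNReal.ofReal (|(R ^ Module.finrank ℝ E)⁻¹|) • volume :=
    Measure.map_addHaar_smul volume hR.ne'
  have hsm : Measurable fun x : E => R • x := measurable_id.const_smul R
  have hpre : (fun x : E => R • x) ⁻¹' (Metric.closedBall (0:E) (4*R)) =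
      Metric.closedBall (0:E) 4 := by
    ext u
    simp only [Set.mem_preimage, Metric.mem_closedBall, dist_zero_right, norm_smul,
      Real.norm_eq_abs, abs_of_pos hR]
    rw [mul_comm (4:ℝ) R]
    exact mul_le_mul_iff_right₀ hR
  have key := setLIntegral_map (μ := (volume : Measure E)) (measurableSet_closedBall
    (x := (0:E)) (ε := 4*R)) hfm hsm
  rw [hmap, hpre, Measure.restrict_smul, lintegral_smul_measure] at key
  have hRn : (0:ℝ) < R ^ Module.finrank ℝ E := pow_pos hR _
  have hcancel : ENNReal.ofReal (R ^ Module.finrank ℝ E) *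
      ENNReal.ofReal (|(R ^ Module.finrank ℝ E)⁻¹|) = 1 := by
    rw [abs_of_pos (inv_pos.mpr hRn), ← ENNReal.ofReal_mul hRn.le,
      mul_inv_cancel₀ hRn.ne', ENNReal.ofReal_one]
  have hI : ∫⁻ x in Metric.closedBall (0:E) (4*R), f x =
      ENNReal.ofReal (R ^ Module.finrank ℝ E) *
        ∫⁻ u in Metric.closedBall (0:E) 4, f (R • u) := by
    rw [← key, smul_eq_mul, ← mul_assoc, hcancel, one_mul]
  have hfu : ∀ u : E, f (R • u) =
      ENNReal.ofReal (R ^ (-(β*q)) / R ^ b) *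
        ENNReal.ofReal (‖u‖ ^ (-(β*q)) / ‖u - e‖ ^ b) := by
    intro u
    have h1 : ‖R • u‖ = R * ‖u‖ := by
      rw [norm_smul, Real.norm_eq_abs, abs_of_pos hR]
    have h2 : R • u - y = R • (u - e) := by rw [hye, ← smul_sub]
    have h3 : ‖R • (u - e)‖ = R * ‖u - e‖ := by
      rw [norm_smul, Real.norm_eq_abs, abs_of_pos hR]
    rw [hfdef]
    simp only
    rw [h1, h2, h3, Real.mul_rpow hR.le (norm_nonneg u),
      Real.mul_rpow hR.le (norm_nonneg _), mul_div_mul_comm,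
      ENNReal.ofReal_mul (by positivity)]
  have hconst : ENNReal.ofReal (R ^ Module.finrank ℝ E) *
      ENNReal.ofReal (R ^ (-(β*q)) / R ^ b) = ENNReal.ofReal (R ^ (α*q)) := by
    rw [← ENNReal.ofReal_mul hRn.le]
    congr 1
    rw [finrank_euclideanSpace_fin, ← Real.rpow_natCast R n, div_eq_mul_inv,
      ← Real.rpow_neg hR.le, ← Real.rpow_add hR, ← Real.rpow_add hR]
    congr 1
    linarith [hexp]
  calc ∫⁻ x in {x : E | ‖x‖ ≤ 4 * R}, f x
      = ∫⁻ x in Metric.closedBall (0:E) (4*R), f x := by rw [hset]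
    _ = ENNReal.ofReal (R ^ Module.finrank ℝ E) *
          ∫⁻ u in Metric.closedBall (0:E) 4, f (R • u) := hI
    _ = ENNReal.ofReal (R ^ Module.finrank ℝ E) *
          (ENNReal.ofReal (R ^ (-(β*q)) / R ^ b) *
            ∫⁻ u in Metric.closedBall (0:E) 4,
              ENNReal.ofReal (‖u‖ ^ (-(β*q)) / ‖u - e‖ ^ b)) := by
        simp_rw [hfu]
        rw [lintegral_const_mul _ (by fun_prop)]
    _ = ENNReal.ofReal (R ^ (α*q)) *
          ∫⁻ u in Metric.closedBall (0:E) 4,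
            ENNReal.ofReal (‖u‖ ^ (-(β*q)) / ‖u - e‖ ^ b) := by
        rw [← mul_assoc, hconst]
    _ ≤ ENNReal.ofReal (R ^ (α*q)) * M := by
        gcongr
        exact hG e he
    _ ≤ ENNReal.ofReal (R ^ (α*q)) * ENNReal.ofReal (M.toReal + 1) := by
        gcongr
        calc M = ENNReal.ofReal M.toReal := (ENNReal.ofReal_toReal hM).symm
          _ ≤ ENNReal.ofReal (M.toReal + 1) := ENNReal.ofReal_le_ofReal (by linarith)
    _ = ENNReal.ofReal ((M.toReal + 1) * R ^ (α * q)) := by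
        rw [← ENNReal.ofReal_mul (Real.rpow_nonneg hR.le _), mul_comm]
end
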